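/- arXiv:1404.3626 — 3 statements merged into one kernel-verified Lean document; each statement's English description precedes it below -/
import Mathlib

section
/- (Putinar's Positivstellensatz, the engine of the paper's convergence Proposition.) Let f, g_1, …, g_m be real polynomials in n variables. Suppose the Archimedean condition holds: there exist N ∈ ℝ and SOS polynomials τ_0, …, τ_m with N − Σ_{i=1}^n x_i² = τ_0 + Σ_{i=1}^m τ_i·g_i. If f(x) > 0 for every x ∈ S_G, then there exist SOS polynomials σ_0, …, σ_m with f = σ_0 + Σ_{i=1}^m σ_i·g_i. -/
open MvPolynomial

/-- A polynomial is a sum of squares (SOS). -/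
def IsSOS {n : ℕ} (σ : MvPolynomial (Fin n) ℝ) : Prop :=
  ∃ (k : ℕ) (h : Fin k → MvPolynomial (Fin n) ℝ), σ = ∑ j, h j ^ 2

namespace PutinarAux

variable {n : ℕ}

local notation "A" => MvPolynomial (Fin n) ℝ

lemma isSOS_zero : IsSOS (0 : A) := ⟨0, ![], by simp⟩

lemma isSOS_sq (p : A) : IsSOS (p ^ 2) := ⟨1, fun _ => p, by simp⟩

lemma isSOS_one : IsSOS (1 : A) := by
  simpa using isSOS_sq (1 : A)

lemma isSOS_add {p q : A} (hp : IsSOS p) (hq : IsSOS q) : IsSOS (p + q) := by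
  obtain ⟨k, h, rfl⟩ := hp
  obtain ⟨k', h', rfl⟩ := hq
  refine ⟨k + k', Fin.append h h', ?_⟩
  rw [Fin.sum_univ_add]
  simp

lemma isSOS_sum {s : Finset ℕ} (f : ℕ → A) (hf : ∀ i ∈ s, IsSOS (f i)) :
    IsSOS (∑ i ∈ s, f i) :=
  Finset.sum_induction f IsSOS (fun _ _ => isSOS_add) isSOS_zero hf

lemma isSOS_sq_mul {q : A} (r : A) (hq : IsSOS q) : IsSOS (r ^ 2 * q) := by
  obtain ⟨k, h, rfl⟩ := hq
  refine ⟨k, fun j => r * h j, ?_⟩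
  rw [Finset.mul_sum]
  congr 1; funext j; ring

lemma isSOS_mul {p q : A} (hp : IsSOS p) (hq : IsSOS q) : IsSOS (p * q) := by
  obtain ⟨k, h, rfl⟩ := hp
  rw [Finset.sum_mul]
  exact Finset.sum_induction _ IsSOS (fun _ _ => isSOS_add) isSOS_zero
    (fun j _ => isSOS_sq_mul (h j) hq)

lemma isSOS_const {c : ℝ} (hc : 0 ≤ c) : IsSOS (C c : A) := by
  have : (C c : A) = (C (Real.sqrt c)) ^ 2 := by
    rw [← C_pow, Real.sq_sqrt hc]
  rw [this]; exact isSOS_sq _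

lemma eval_isSOS_nonneg {p : A} (hp : IsSOS p) (x : Fin n → ℝ) : 0 ≤ eval x p := by
  obtain ⟨k, h, rfl⟩ := hp
  rw [map_sum]
  exact Finset.sum_nonneg fun j _ => by rw [map_pow]; positivity

/-- Quadratic module. -/
structure IsQM (Q : Set (MvPolynomial (Fin n) ℝ)) : Prop where
  add_mem : ∀ {x y}, x ∈ Q → y ∈ Q → x + y ∈ Q
  sos_mul_mem : ∀ {σ x}, IsSOS σ → x ∈ Q → σ * x ∈ Q
  one_mem : (1 : MvPolynomial (Fin n) ℝ) ∈ Q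

namespace IsQM

variable {Q : Set (MvPolynomial (Fin n) ℝ)}

lemma mem_of_eq (_hQ : IsQM Q) {x y : A} (h : x = y) (hy : y ∈ Q) : x ∈ Q := h ▸ hy

lemma sos_mem (hQ : IsQM Q) {σ : A} (hσ : IsSOS σ) : σ ∈ Q :=
  hQ.mem_of_eq (by ring) (hQ.sos_mul_mem hσ hQ.one_mem)

lemma zero_mem (hQ : IsQM Q) : (0 : A) ∈ Q := hQ.sos_mem isSOS_zero

lemma const_mem (hQ : IsQM Q) {c : ℝ} (hc : 0 ≤ c) : (C c : A) ∈ Q := hQ.sos_mem (isSOS_const hc)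

lemma smul_mem (hQ : IsQM Q) {c : ℝ} (hc : 0 ≤ c) {x : A} (hx : x ∈ Q) : C c * x ∈ Q :=
  hQ.sos_mul_mem (isSOS_const hc) hx

lemma sq_mul_mem (hQ : IsQM Q) (r : A) {x : A} (hx : x ∈ Q) : r ^ 2 * x ∈ Q :=
  hQ.sos_mul_mem (isSOS_sq r) hx

lemma add_const_mem (hQ : IsQM Q) {c : ℝ} (hc : 0 ≤ c) {x : A} (hx : x ∈ Q) : C c + x ∈ Q :=
  hQ.add_mem (hQ.const_mem hc) hx

lemma smul_cancel (hQ : IsQM Q) {c : ℝ} (hc : 0 < c) {x : A} (h : C c * x ∈ Q) : x ∈ Q := by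
  have h2 := hQ.smul_mem (le_of_lt (by positivity : (0:ℝ) < 1 / c)) h
  refine IsQM.mem_of_eq hQ ?_ h2
  rw [← mul_assoc, ← C_mul, one_div, inv_mul_cancel₀ hc.ne', C_1, one_mul]

/-- Product trick: two module elements whose sum is a positive constant have product in `Q`. -/
lemma prod_trick (hQ : IsQM Q) {x y : A} (hx : x ∈ Q) (hy : y ∈ Q) {c : ℝ}
    (h : x + y = C c) (hc : 0 < c) : x * y ∈ Q := by
  apply hQ.smul_cancel hc
  have : C c * (x * y) = x ^ 2 * y + y ^ 2 * x := by rw [← h]; ring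
  rw [this]
  exact hQ.add_mem (hQ.sq_mul_mem x hy) (hQ.sq_mul_mem y hx)

lemma pow_mul_mem (hQ : IsQM Q) {v : A} (hv : v ∈ Q) {d : ℝ} (hdv : C d - v ∈ Q) (hd : 0 < d)
    {x : A} (hx : x ∈ Q) (i : ℕ) : v ^ i * (C d - v) ∈ Q := by
  rcases Nat.even_or_odd i with ⟨j, hj⟩ | ⟨j, hj⟩
  · have : v ^ i * (C d - v) = (v ^ j) ^ 2 * (C d - v) := by
      rw [← pow_mul]; rw [hj]; ring_nf
    rw [this]; exact hQ.sq_mul_mem _ hdv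
  · have hprod : v * (C d - v) ∈ Q :=
      hQ.prod_trick hv hdv (by ring) hd
    have : v ^ i * (C d - v) = (v ^ j) ^ 2 * (v * (C d - v)) := by
      rw [hj]; ring
    rw [this]; exact hQ.sq_mul_mem _ hprod

/-- Power monotonicity: `v ≤ d` in the module sense implies `vⁱ ≤ dⁱ`. -/
lemma pow_sub_pow (hQ : IsQM Q) {v : A} (hv : v ∈ Q) {d : ℝ} (hdv : C d - v ∈ Q) (hd : 0 < d) :
    ∀ i : ℕ, (C (d ^ i) : A) - v ^ i ∈ Q := by
  intro i
  induction i with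
  | zero => simp only [pow_zero, C_1, sub_self]; exact hQ.zero_mem
  | succ i ih =>
    have heq : (C (d ^ (i+1)) : A) - v ^ (i+1)
        = C d * (C (d ^ i) - v ^ i) + v ^ i * (C d - v) := by
      rw [pow_succ, C_mul]; ring
    rw [heq]
    exact hQ.add_mem (hQ.smul_mem hd.le ih) (hQ.pow_mul_mem hv hdv hd hQ.one_mem i)

end IsQM

open IsQM

variable {Q : Set (MvPolynomial (Fin n) ℝ)}

/-- Boundedness via the special Archimedean generator. -/
lemma arch_of_qm (hQ : IsQM Q) {N : ℝ}
    (hNX : (C N : A) - ∑ i : Fin n, X i ^ 2 ∈ Q) :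
    ∀ p : A, ∃ c : ℝ, 2 ≤ c ∧ C c - p ∈ Q ∧ C c + p ∈ Q := by
  -- step 1: every polynomial has a square bound
  have bdd2 : ∀ p : A, ∃ N' : ℝ, 0 ≤ N' ∧ (C N' : A) - p ^ 2 ∈ Q := by
    intro p
    induction p using MvPolynomial.induction_on with
    | C r =>
      exact ⟨r ^ 2, sq_nonneg r, by rw [← C_pow]; simpa using hQ.zero_mem⟩
    | add p q hp hq =>
      obtain ⟨N₁, hN₁, h1⟩ := hp
      obtain ⟨N₂, hN₂, h2⟩ := hq
      refine ⟨2 * N₁ + 2 * N₂, by positivity, ?_⟩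
      have heq : (C (2 * N₁ + 2 * N₂) : A) - (p + q) ^ 2
          = (p - q) ^ 2 + C 2 * (C N₁ - p ^ 2) + C 2 * (C N₂ - q ^ 2) := by
        have hC2 : (C (2:ℝ) : A) = 2 := map_ofNat C 2
        rw [C_add, C_mul, C_mul, hC2]
        ring
      rw [heq]
      exact hQ.add_mem (hQ.add_mem (hQ.sos_mem (isSOS_sq _))
        (hQ.smul_mem (by norm_num) h1)) (hQ.smul_mem (by norm_num) h2)
    | mul_X p i hp =>
      obtain ⟨N₁, hN₁, h1⟩ := hp
      -- bound for X i
      have hXi : (C (max N 0) : A) - (X i) ^ 2 ∈ Q := by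
        have hsum : (C (max N 0) : A) - (X i) ^ 2
            = C (max N 0 - N) + ((C N - ∑ j : Fin n, X j ^ 2)
              + ∑ j ∈ Finset.univ.erase i, X j ^ 2) := by
          rw [C_sub]
          have := Finset.sum_erase_add Finset.univ (fun j : Fin n => (X j : A) ^ 2)
            (Finset.mem_univ i)
          rw [← this]; ring
        rw [hsum]
        refine hQ.add_const_mem (by simp [le_max_iff]) (hQ.add_mem hNX ?_)
        exact Finset.sum_induction _ _ (fun _ _ ha hb => hQ.add_mem ha hb) hQ.zero_mem
          (fun j _ => hQ.sos_mem (isSOS_sq _))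
      refine ⟨N₁ * max N 0, by positivity, ?_⟩
      have heq : (C (N₁ * max N 0) : A) - (p * X i) ^ 2
          = (X i) ^ 2 * (C N₁ - p ^ 2) + C N₁ * (C (max N 0) - (X i) ^ 2) := by
        rw [C_mul]; ring
      rw [heq]
      exact hQ.add_mem (hQ.sq_mul_mem _ h1) (hQ.smul_mem hN₁ hXi)
  -- step 2: square bound gives linear two-sided bound
  intro p
  obtain ⟨N', hN', hb⟩ := bdd2 p
  set c : ℝ := N' + 2 with hc
  have hcpos : (0:ℝ) < c := by positivity
  have hc2 : (2:ℝ) ≤ c := by linarith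
  have hkey : ∀ e : A, (e ^ 2 + (C N' - p ^ 2) + C (c ^ 2 - N') ∈ Q) := by
    intro e
    exact hQ.add_mem (hQ.add_mem (hQ.sos_mem (isSOS_sq _)) hb)
      (hQ.const_mem (by nlinarith))
  refine ⟨c, hc2, ?_, ?_⟩
  · apply hQ.smul_cancel (show (0:ℝ) < 2 * c by positivity)
    have heq : (C (2 * c) : A) * (C c - p)
        = (C c - p) ^ 2 + (C N' - p ^ 2) + C (c ^ 2 - N') := by
      rw [C_mul, C_sub, C_pow]
      rw [map_ofNat C 2]; ring
    rw [heq]; exact hkey _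
  · apply hQ.smul_cancel (show (0:ℝ) < 2 * c by positivity)
    have heq : (C (2 * c) : A) * (C c + p)
        = (C c + p) ^ 2 + (C N' - p ^ 2) + C (c ^ 2 - N') := by
      rw [C_mul, C_sub, C_pow]
      rw [map_ofNat C 2]; ring
    rw [heq]; exact hkey _


/-- Core lemma: if `s` is SOS and `s*a ≥ 1` in the module sense, then `a + ε ∈ Q`. -/
lemma lemB (hQ : IsQM Q)
    (harch : ∀ p : A, ∃ c : ℝ, 2 ≤ c ∧ C c - p ∈ Q ∧ C c + p ∈ Q)
    {s a : A} (hs : IsSOS s) (hsa : s * a - 1 ∈ Q) :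
    ∀ ε : ℝ, 0 < ε → a + C ε ∈ Q := by
  intro ε hε
  obtain ⟨k, hk2, hks, -⟩ := harch s
  obtain ⟨l, hl2, hla, hla'⟩ := harch a
  have hk0 : (0:ℝ) < k := by linarith
  have hl0 : (0:ℝ) < l := by linarith
  have hCkk : (C ((1:ℝ)/k) : A) * C k = 1 := by
    rw [← C_mul, one_div, inv_mul_cancel₀ hk0.ne', C_1]
  set u : A := C ((1:ℝ)/k) * s with hu_def
  set ta : A := C k * a with hta_def
  have hu : IsSOS u := isSOS_mul (isSOS_const (by positivity)) hs
  have hua : u * ta - 1 ∈ Q := by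
    refine hQ.mem_of_eq ?_ hsa
    have : u * ta = (C ((1:ℝ)/k) * C k) * (s * a) := by rw [hu_def, hta_def]; ring
    rw [this, hCkk, one_mul]
  set v : A := 1 - u with hv_def
  have hv : v ∈ Q := by
    refine hQ.mem_of_eq ?_ (hQ.smul_mem (by positivity : (0:ℝ) ≤ 1/k) hks)
    rw [hv_def, mul_sub, hCkk]
  set L : ℝ := k * l with hL_def
  have hL4 : (4:ℝ) ≤ L := by nlinarith
  have hL0 : (0:ℝ) < L := by linarith
  have htaL : ta + C L ∈ Q := by
    refine hQ.mem_of_eq ?_ (hQ.smul_mem hk0.le hla')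
    rw [hta_def, hL_def, mul_add, ← C_mul]; try ring
  have htaL' : C L - ta ∈ Q := by
    refine hQ.mem_of_eq ?_ (hQ.smul_mem hk0.le hla)
    rw [hta_def, hL_def, mul_sub, ← C_mul]; try ring
  set γ : ℝ := 1 / L with hγ_def
  set d : ℝ := 1 - γ with hd_def
  have hγ0 : 0 < γ := by positivity
  have hγ4 : γ ≤ 1/4 := by rw [hγ_def]; rw [div_le_div_iff₀ hL0 (by norm_num)]; linarith
  have hd0 : (0:ℝ) < d := by rw [hd_def]; linarith
  have hd1 : d < 1 := by rw [hd_def]; linarith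
  -- u - C γ ∈ Q
  have hsl : s * C l - 1 ∈ Q := by
    refine hQ.mem_of_eq ?_ (hQ.add_mem hsa (hQ.sos_mul_mem hs hla))
    ring
  have huγ : u - C γ ∈ Q := by
    have hmem := hQ.smul_mem (by positivity : (0:ℝ) ≤ 1/L) hsl
    refine hQ.mem_of_eq ?_ hmem
    have h1 : (C ((1:ℝ)/L) : A) * C l = C ((1:ℝ)/k) := by
      rw [← C_mul]; congr 1; rw [hL_def]; field_simp; try ring
    rw [mul_sub, mul_one, mul_comm s (C l), ← mul_assoc, h1, hγ_def, hu_def]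
  have hdv : C d - v ∈ Q := by
    refine hQ.mem_of_eq ?_ huγ
    rw [hd_def, hv_def, C_sub, C_1]; ring
  -- choose the exponent
  obtain ⟨t, ht⟩ := exists_pow_lt_of_lt_one (show (0:ℝ) < k*ε/(3*L) by positivity) hd1
  obtain ⟨m, hm_def⟩ : ∃ m : ℕ, m = 2 * t := ⟨2 * t, rfl⟩
  have hdm_le : d ^ m ≤ d ^ t := pow_le_pow_of_le_one hd0.le hd1.le (by omega)
  have hd2m_le : d ^ (2*m) ≤ d ^ m := pow_le_pow_of_le_one hd0.le hd1.le (by omega)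
  have hdmpos : 0 < d ^ m := pow_pos hd0 m
  have hδ : 2*L*d^m + L*d^(2*m) ≤ k*ε := by
    have h1 : d ^ m < k*ε/(3*L) := lt_of_le_of_lt hdm_le ht
    have h2 : d^m * (3*L) < k*ε := (lt_div_iff₀ (by positivity : (0:ℝ) < 3*L)).mp h1
    nlinarith [hd2m_le, hdmpos.le, hL0]
  set h : A := ∑ i ∈ Finset.range m, v ^ i with hh_def
  have key : u * h = 1 - v ^ m := by
    have hgeom := geom_sum_mul v m
    have hu_eq : u = 1 - v := by rw [hv_def]; ring
    rw [hu_eq, hh_def]; linear_combination -hgeom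
  -- the seven certified terms
  set CL : A := C L with hCL_def
  set Cdm : A := C (d ^ m) with hCdm_def
  clear_value u ta v h CL Cdm d γ L
  have hT1 : (u * h^2) * (u * ta - 1) ∈ Q :=
    hQ.sos_mul_mem (isSOS_mul hu (isSOS_sq h)) hua
  have hT2 : u * h^2 ∈ Q := hQ.sos_mem (isSOS_mul hu (isSOS_sq h))
  have hwsq : v ^ m = (v ^ t) ^ 2 := by rw [hm_def, mul_comm 2 t, pow_mul]
  have hv2m : v ^ (2*m) = (v ^ m) ^ 2 := by rw [mul_comm 2 m, pow_mul]
  have hd2m : d ^ (2*m) = (d ^ m) ^ 2 := by rw [mul_comm 2 m, pow_mul]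
  have hT3 : 2 * v^m * (ta + CL) ∈ Q := by
    refine hQ.mem_of_eq (show _ = (C 2 * (v^t)^2) * (ta + CL) from ?_) ?_
    · rw [map_ofNat C 2, hwsq]
    · exact hQ.sos_mul_mem (isSOS_mul (isSOS_const (by norm_num)) (isSOS_sq _)) htaL
  have hT4 : (v^m)^2 * (CL - ta) ∈ Q := hQ.sq_mul_mem _ htaL'
  have hps := hQ.pow_sub_pow hv hdv hd0
  have hT5 : 2 * CL * (Cdm - v^m) ∈ Q := by
    refine hQ.mem_of_eq (show _ = C (2*L) * (C (d^m) - v^m) from ?_) ?_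
    · rw [hCL_def, hCdm_def]; simp only [C_sub, C_add, C_mul, C_pow, map_ofNat]
    · exact hQ.smul_mem (by positivity) (hps m)
  have hT6 : CL * (Cdm^2 - (v^m)^2) ∈ Q := by
    refine hQ.mem_of_eq (show _ = C L * (C (d^(2*m)) - v^(2*m)) from ?_) ?_
    · rw [hCL_def, hCdm_def, hd2m, hv2m]; simp only [C_sub, C_add, C_mul, C_pow, map_ofNat]
    · exact hQ.smul_mem hL0.le (hps (2*m))
  have hT7 : C (k*ε) - 2*CL*Cdm - CL*Cdm^2 ∈ Q := by
    refine hQ.mem_of_eq (show _ = C (k*ε - (2*L*d^m + L*d^(2*m))) from ?_) ?_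
    · rw [hCL_def, hCdm_def, hd2m]; simp only [C_sub, C_add, C_mul, C_pow, map_ofNat]
      ring
    · exact hQ.const_mem (by linarith)
  have big : ta + C (k*ε) ∈ Q := by
    refine hQ.mem_of_eq ?_
      (hQ.add_mem (hQ.add_mem (hQ.add_mem (hQ.add_mem (hQ.add_mem
        (hQ.add_mem hT1 hT2) hT3) hT4) hT5) hT6) hT7)
    linear_combination (-(u * h + 1 - v ^ m)) * ta * key
  refine hQ.mem_of_eq ?_ (hQ.smul_mem (by positivity : (0:ℝ) ≤ 1/k) big)
  rw [mul_add, hta_def, ← mul_assoc, hCkk, one_mul, ← C_mul]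
  congr 2
  field_simp


lemma nonneg_of_C_mem (hQ : IsQM Q) (hproper : (-1 : A) ∉ Q) {r : ℝ}
    (hr : (C r : A) ∈ Q) : 0 ≤ r := by
  by_contra hneg
  push_neg at hneg
  apply hproper
  have hrpos : (0:ℝ) < -r := neg_pos.mpr hneg
  have hmem := hQ.smul_mem (le_of_lt (div_pos one_pos hrpos)) hr
  refine hQ.mem_of_eq ?_ hmem
  rw [← C_mul]
  have : 1/(-r) * r = -1 := by
    rw [one_div, inv_neg, neg_mul, inv_mul_cancel₀ hneg.ne]
  rw [this, map_neg, C_1]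

/-- An Archimedean proper semiordering containing a quadratic module. -/
structure Semiord (Q : Set (MvPolynomial (Fin n) ℝ)) : Prop where
  qm : IsQM Q
  arch : ∀ p, ∃ c : ℝ, 2 ≤ c ∧ C c - p ∈ Q ∧ C c + p ∈ Q
  proper : (-1 : MvPolynomial (Fin n) ℝ) ∉ Q
  semi : ∀ x, x ∈ Q ∨ -x ∈ Q

def aSet (Q : Set (MvPolynomial (Fin n) ℝ)) (b : A) : Set ℝ := {r | C r - b ∈ Q}

noncomputable def alph (Q : Set (MvPolynomial (Fin n) ℝ)) (b : A) : ℝ := sInf (aSet Q b)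

namespace Semiord

variable {Q : Set (MvPolynomial (Fin n) ℝ)}

lemma aSet_nonempty (hS : Semiord Q) (b : A) : (aSet Q b).Nonempty := by
  obtain ⟨c, -, hc, -⟩ := hS.arch b
  exact ⟨c, hc⟩

lemma aSet_bddBelow (hS : Semiord Q) (b : A) : BddBelow (aSet Q b) := by
  obtain ⟨c, -, -, hc⟩ := hS.arch b
  refine ⟨-c, fun r hr => ?_⟩
  have : (C (r + c) : A) ∈ Q := by
    refine hS.qm.mem_of_eq ?_ (hS.qm.add_mem hr hc)
    rw [C_add]; ring
  linarith [nonneg_of_C_mem hS.qm hS.proper this]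

lemma aSet_upward (hS : Semiord Q) {b : A} {r r' : ℝ} (h : r ∈ aSet Q b)
    (hle : r ≤ r') : r' ∈ aSet Q b := by
  have : (C (r' - r) : A) + (C r - b) ∈ Q := hS.qm.add_const_mem (by linarith) h
  refine hS.qm.mem_of_eq ?_ this
  rw [C_sub]; ring

lemma a1 (hS : Semiord Q) {b : A} {r : ℝ} (h : alph Q b < r) : (C r : A) - b ∈ Q := by
  obtain ⟨r', hr', hlt⟩ := exists_lt_of_csInf_lt (hS.aSet_nonempty b) h
  exact hS.aSet_upward hr' hlt.le

lemma a3 (hS : Semiord Q) {b : A} {r : ℝ} (h : (C r : A) - b ∈ Q) : alph Q b ≤ r :=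
  csInf_le (hS.aSet_bddBelow b) h

lemma a2 (hS : Semiord Q) {b : A} {r : ℝ} (h : r < alph Q b) : b - (C r : A) ∈ Q := by
  rcases hS.semi (C r - b) with hmem | hmem
  · exact absurd (hS.a3 hmem) (not_le.mpr h)
  · exact hS.qm.mem_of_eq (by ring) hmem

lemma a_nonneg (hS : Semiord Q) {b : A} (hb : b ∈ Q) : 0 ≤ alph Q b := by
  by_contra hneg
  push_neg at hneg
  have h1 : (C (alph Q b / 2) : A) - b ∈ Q := hS.a1 (by linarith)
  have h2 : (C (alph Q b / 2) : A) ∈ Q :=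
    hS.qm.mem_of_eq (by ring) (hS.qm.add_mem h1 hb)
  linarith [nonneg_of_C_mem hS.qm hS.proper h2]

lemma a_add (hS : Semiord Q) (b c : A) : alph Q (b + c) = alph Q b + alph Q c := by
  apply le_antisymm
  · apply le_of_forall_pos_le_add
    intro ε hε
    have h1 : (C (alph Q b + ε/2) : A) - b ∈ Q := hS.a1 (by linarith)
    have h2 : (C (alph Q c + ε/2) : A) - c ∈ Q := hS.a1 (by linarith)
    have h3 : (C (alph Q b + ε/2 + (alph Q c + ε/2)) : A) - (b + c) ∈ Q := by
      refine hS.qm.mem_of_eq ?_ (hS.qm.add_mem h1 h2)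
      rw [C_add]; ring
    have := hS.a3 h3
    linarith
  · by_contra hlt
    push_neg at hlt
    obtain ⟨η, hη⟩ : ∃ η : ℝ, η = (alph Q b + alph Q c - alph Q (b + c))/4 := ⟨_, rfl⟩
    have hη0 : 0 < η := by rw [hη]; linarith
    have h1 : b - C (alph Q b - η) ∈ Q := hS.a2 (by linarith)
    have h2 : c - C (alph Q c - η) ∈ Q := hS.a2 (by linarith)
    have h3 : (C (alph Q (b + c) + η) : A) - (b + c) ∈ Q := hS.a1 (by linarith)
    have hc4 : (C (alph Q (b + c)) : A) = C (alph Q b) + C (alph Q c) - 4 * C η := by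
      have hre : alph Q (b + c) = alph Q b + alph Q c - 4*η := by rw [hη]; ring
      rw [hre]
      simp only [C_sub, C_add, C_mul, map_ofNat]
    have h4 : (C (-η) : A) ∈ Q := by
      refine hS.qm.mem_of_eq ?_ (hS.qm.add_mem (hS.qm.add_mem h1 h2) h3)
      simp only [map_neg, C_sub, C_add]
      linear_combination -hc4
    have := nonneg_of_C_mem hS.qm hS.proper h4
    linarith


lemma a_C (hS : Semiord Q) (r : ℝ) : alph Q (C r) = r := by
  apply le_antisymm
  · exact hS.a3 (by rw [sub_self]; exact hS.qm.zero_mem)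
  · by_contra hlt
    push_neg at hlt
    have h1 : (C ((alph Q (C r) + r)/2) : A) - C r ∈ Q := hS.a1 (by linarith)
    have h2 : (C ((alph Q (C r) + r)/2 - r) : A) ∈ Q := by
      refine hS.qm.mem_of_eq ?_ h1
      rw [C_sub]
    linarith [nonneg_of_C_mem hS.qm hS.proper h2]

lemma a_zero (hS : Semiord Q) : alph Q 0 = 0 := by
  have := hS.a_C 0
  rwa [C_0] at this

lemma a_neg (hS : Semiord Q) (b : A) : alph Q (-b) = - alph Q b := by
  have h := hS.a_add b (-b)
  rw [add_neg_cancel, hS.a_zero] at h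
  linarith

lemma a_smul_pos (hS : Semiord Q) {t : ℝ} (ht : 0 < t) (b : A) :
    alph Q (C t * b) = t * alph Q b := by
  apply le_antisymm
  · apply le_of_forall_pos_le_add
    intro ε hε
    have h1 : (C (alph Q b + ε/t) : A) - b ∈ Q := hS.a1 (by
      have := div_pos hε ht; linarith)
    have h2 : (C (t * (alph Q b + ε/t)) : A) - C t * b ∈ Q := by
      refine hS.qm.mem_of_eq ?_ (hS.qm.smul_mem ht.le h1)
      rw [C_mul]; ring
    have h3 := hS.a3 h2
    have : t * (alph Q b + ε/t) = t * alph Q b + ε := by field_simp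
    linarith [this ▸ h3]
  · by_contra hlt
    push_neg at hlt
    obtain ⟨η, hη⟩ : ∃ η : ℝ, η = (t * alph Q b - alph Q (C t * b))/4 := ⟨_, rfl⟩
    have hη0 : 0 < η := by rw [hη]; linarith
    have h1 : b - C (alph Q b - η/t) ∈ Q := hS.a2 (by
      have : 0 < η/t := by positivity
      linarith)
    have h2 : C t * b - C (t * (alph Q b - η/t)) ∈ Q := by
      refine hS.qm.mem_of_eq ?_ (hS.qm.smul_mem ht.le h1)
      rw [C_mul]; ring
    have h3 : (C (alph Q (C t * b) + η) : A) - C t * b ∈ Q := hS.a1 (by linarith)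
    have h4 : (C (alph Q (C t * b) + η - t * (alph Q b - η/t)) : A) ∈ Q := by
      refine hS.qm.mem_of_eq ?_ (hS.qm.add_mem h2 h3)
      rw [C_sub]; ring
    have h5 := nonneg_of_C_mem hS.qm hS.proper h4
    have h6 : t * (η/t) = η := by field_simp
    nlinarith [h5, h6]

lemma a_smul (hS : Semiord Q) (t : ℝ) (b : A) :
    alph Q (C t * b) = t * alph Q b := by
  rcases lt_trichotomy t 0 with hneg | hzero | hpos
  · have heq : C t * b = -(C (-t) * b) := by rw [map_neg]; ring
    rw [heq, hS.a_neg, hS.a_smul_pos (by linarith : (0:ℝ) < -t)]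
    ring
  · rw [hzero, C_0, zero_mul, hS.a_zero]; ring
  · exact hS.a_smul_pos hpos b

lemma a_sub (hS : Semiord Q) (b c : A) : alph Q (b - c) = alph Q b - alph Q c := by
  have h := hS.a_add (b - c) c
  rw [sub_add_cancel] at h
  linarith

lemma a_sq (hS : Semiord Q) (b : A) : alph Q (b^2) = (alph Q b)^2 := by
  have hge : ∀ e : A, (alph Q e)^2 ≤ alph Q (e^2) := by
    intro e
    obtain ⟨r, hr⟩ : ∃ r : ℝ, r = alph Q e := ⟨_, rfl⟩
    have hsq : (0:ℝ) ≤ alph Q ((e - C r)^2) :=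
      hS.a_nonneg (hS.qm.sos_mem (isSOS_sq _))
    have hexp : (e - C r)^2 = e^2 - C (2*r) * e + C (r^2) := by
      simp only [C_mul, C_pow, map_ofNat]
      ring
    rw [hexp] at hsq
    have h1 : alph Q (e^2 - C (2*r) * e + C (r^2))
        = alph Q (e^2) - 2*r*(alph Q e) + r^2 := by
      rw [hS.a_add, hS.a_sub, hS.a_smul, hS.a_C]
    rw [h1, ← hr] at hsq
    rw [← hr]
    nlinarith [hsq]
  apply le_antisymm ?_ (hge b)
  obtain ⟨c, hc_def⟩ : ∃ c : A, c = b - C (alph Q b) := ⟨_, rfl⟩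
  have hc0 : alph Q c = 0 := by
    rw [hc_def, hS.a_sub, hS.a_C, sub_self]
  have hkey : ∀ ε : ℝ, 0 < ε → ε < 1 → alph Q (c^2) ≤ 2*ε/(4 - 2*ε) := by
    intro ε hε hε1
    have hq1 : (C ε : A) - c ∈ Q := hS.a1 (by rw [hc0]; exact hε)
    have hq2 : c + (C ε : A) ∈ Q := by
      have := hS.a2 (show -ε < alph Q c by rw [hc0]; linarith)
      refine hS.qm.mem_of_eq ?_ this
      rw [map_neg]; ring
    have hq : (c+1)^2 * (C ε - c) + (c-1)^2 * (c + C ε) ∈ Q :=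
      hS.qm.add_mem (hS.qm.sq_mul_mem _ hq1) (hS.qm.sq_mul_mem _ hq2)
    have heq : (c+1)^2 * (C ε - c) + (c-1)^2 * (c + C ε)
        = C (2*ε - 4) * c^2 + C (2*ε) := by
      simp only [C_sub, C_mul, map_ofNat]
      ring
    rw [heq] at hq
    have h0 := hS.a_nonneg hq
    have h1 : alph Q (C (2*ε - 4) * c^2 + C (2*ε))
        = (2*ε - 4) * alph Q (c^2) + 2*ε := by
      rw [hS.a_add, hS.a_smul, hS.a_C]
    rw [h1] at h0
    rw [le_div_iff₀ (by linarith : (0:ℝ) < 4 - 2*ε)]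
    nlinarith [h0]
  have hc2 : alph Q (c^2) ≤ 0 := by
    by_contra hpos
    push_neg at hpos
    obtain ⟨ε, hε⟩ : ∃ ε : ℝ, ε = min (1/2) (alph Q (c^2)) := ⟨_, rfl⟩
    have hε0 : 0 < ε := by rw [hε]; exact lt_min (by norm_num) hpos
    have hε1 : ε ≤ 1/2 := by rw [hε]; exact min_le_left _ _
    have hεX : ε ≤ alph Q (c^2) := by rw [hε]; exact min_le_right _ _
    have := hkey ε hε0 (by linarith)
    have hd : 2*ε/(4 - 2*ε) ≤ 2*ε/3 := by
      apply div_le_div_of_nonneg_left (by linarith) (by norm_num) (by linarith)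
    linarith
  have hc2' : alph Q (c^2) = 0 := le_antisymm hc2 (by simpa [hc0] using hge c)
  have hexp : c^2 = b^2 - C (2*(alph Q b)) * b + C ((alph Q b)^2) := by
    rw [hc_def]
    simp only [C_mul, C_pow, map_ofNat]
    ring
  have h2 : alph Q (c^2) = alph Q (b^2) - 2*(alph Q b)*(alph Q b) + (alph Q b)^2 := by
    rw [hexp, hS.a_add, hS.a_sub, hS.a_smul, hS.a_C]
  nlinarith [hc2', h2]

lemma a_mul (hS : Semiord Q) (x y : A) : alph Q (x*y) = alph Q x * alph Q y := by
  have h4 : (x+y)^2 = (x-y)^2 + C (4:ℝ) * (x*y) := by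
    rw [map_ofNat]; ring
  have h5 : alph Q ((x+y)^2) = alph Q ((x-y)^2) + 4 * alph Q (x*y) := by
    rw [h4, hS.a_add, hS.a_smul]
  rw [hS.a_sq, hS.a_sq, hS.a_add, hS.a_sub] at h5
  nlinarith [h5]

end Semiord


variable {m : ℕ}

/-- The quadratic module generated by `g`. -/
def MSet (g : Fin m → MvPolynomial (Fin n) ℝ) : Set (MvPolynomial (Fin n) ℝ) :=
  {p | ∃ (σ₀ : MvPolynomial (Fin n) ℝ) (σ : Fin m → MvPolynomial (Fin n) ℝ),
    IsSOS σ₀ ∧ (∀ i, IsSOS (σ i)) ∧ p = σ₀ + ∑ i, σ i * g i}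

lemma isQM_MSet (g : Fin m → MvPolynomial (Fin n) ℝ) : IsQM (MSet g) where
  add_mem := by
    rintro x y ⟨σ₀, σ, hσ₀, hσ, rfl⟩ ⟨τ₀, τ, hτ₀, hτ, rfl⟩
    refine ⟨σ₀ + τ₀, fun i => σ i + τ i, isSOS_add hσ₀ hτ₀,
      fun i => isSOS_add (hσ i) (hτ i), ?_⟩
    rw [show (∑ i, (σ i + τ i) * g i) = ∑ i, (σ i * g i + τ i * g i) from
      Finset.sum_congr rfl fun i _ => by ring, Finset.sum_add_distrib]
    ring
  sos_mul_mem := by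
    rintro ρ x hρ ⟨σ₀, σ, hσ₀, hσ, rfl⟩
    refine ⟨ρ * σ₀, fun i => ρ * σ i, isSOS_mul hρ hσ₀,
      fun i => isSOS_mul hρ (hσ i), ?_⟩
    rw [mul_add, Finset.mul_sum]
    congr 1
    exact Finset.sum_congr rfl fun i _ => by ring
  one_mem := ⟨1, fun _ => 0, isSOS_one, fun _ => isSOS_zero, by simp⟩

lemma g_mem_MSet (g : Fin m → MvPolynomial (Fin n) ℝ) (i : Fin m) : g i ∈ MSet g := by
  refine ⟨0, fun j => if j = i then 1 else 0, isSOS_zero, fun j => ?_, ?_⟩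
  · by_cases h : j = i <;> simp [h, isSOS_one, isSOS_zero]
  · rw [show (∑ j, (if j = i then (1:A) else 0) * g j) = ∑ j, (if j = i then g j else 0)
      from Finset.sum_congr rfl fun j _ => by split <;> simp]
    rw [Finset.sum_ite_eq' Finset.univ i g]
    simp

/-- The key lemma: a polynomial strictly positive on `S_G` is in the module up to any `δ`. -/
lemma star (g : Fin m → MvPolynomial (Fin n) ℝ) {N : ℝ}
    (hNX : (C N : A) - ∑ i : Fin n, X i ^ 2 ∈ MSet g) (p : A)
    (hp : ∀ x : Fin n → ℝ, (∀ i, 0 ≤ eval x (g i)) → 0 < eval x p)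
    (δ : ℝ) (hδ : 0 < δ) : p + C δ ∈ MSet g := by
  have hQM : IsQM (MSet g) := isQM_MSet g
  have harch := arch_of_qm hQM hNX
  obtain ⟨a, ha_def⟩ : ∃ a : A, a = p + C (δ/2) := ⟨_, rfl⟩
  obtain ⟨M₂, hM₂_def⟩ : ∃ M₂ : Set A,
      M₂ = {y | ∃ x ∈ MSet g, ∃ σ, IsSOS σ ∧ y = x - σ * a} := ⟨_, rfl⟩
  have hM₂ : IsQM M₂ := by
    constructor
    · rintro x y hx hy
      rw [hM₂_def] at hx hy ⊢
      obtain ⟨x₁, hx₁, σ, hσ, rfl⟩ := hx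
      obtain ⟨y₁, hy₁, τ, hτ, rfl⟩ := hy
      exact ⟨x₁ + y₁, hQM.add_mem hx₁ hy₁, σ + τ, isSOS_add hσ hτ, by ring⟩
    · rintro ρ x hρ hx
      rw [hM₂_def] at hx ⊢
      obtain ⟨x₁, hx₁, σ, hσ, rfl⟩ := hx
      exact ⟨ρ * x₁, hQM.sos_mul_mem hρ hx₁, ρ * σ, isSOS_mul hρ hσ, by ring⟩
    · rw [hM₂_def]
      exact ⟨1, hQM.one_mem, 0, isSOS_zero, by ring⟩
  have hMM₂ : MSet g ⊆ M₂ := by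
    intro x hx
    rw [hM₂_def]
    exact ⟨x, hx, 0, isSOS_zero, by ring⟩
  have hnegA : -a ∈ M₂ := by
    rw [hM₂_def]
    exact ⟨0, hQM.zero_mem, 1, isSOS_one, by ring⟩
  by_cases himp : (-1 : A) ∈ M₂
  · -- improper case: the core lemma applies
    rw [hM₂_def] at himp
    obtain ⟨x, hx, σ, hσ, hx_eq⟩ := himp
    have hσa : σ * a - 1 ∈ MSet g := by
      refine hQM.mem_of_eq ?_ hx
      linear_combination hx_eq
    have hfin := lemB hQM harch hσ hσa (δ/2) (by linarith)
    refine hQM.mem_of_eq ?_ hfin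
    rw [ha_def, show δ = δ/2 + δ/2 from by ring, C_add]
    ring
  · -- proper case: Zorn + semiordering, contradiction with positivity
    exfalso
    obtain ⟨S, hS_def⟩ : ∃ S : Set (Set A),
        S = {Q' : Set A | IsQM Q' ∧ M₂ ⊆ Q' ∧ (-1 : A) ∉ Q'} := ⟨_, rfl⟩
    have hM₂S : M₂ ∈ S := by rw [hS_def]; exact ⟨hM₂, subset_rfl, himp⟩
    have hchainub : ∀ c ⊆ S, IsChain (· ⊆ ·) c → c.Nonempty →
        ∃ ub ∈ S, ∀ s ∈ c, s ⊆ ub := by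
      intro c hcS hchain hcne
      have hSmem : ∀ q', q' ∈ S → IsQM q' ∧ M₂ ⊆ q' ∧ (-1 : A) ∉ q' := by
        intro q' h; rwa [hS_def] at h
      refine ⟨⋃₀ c, ?_, fun s hs => Set.subset_sUnion_of_mem hs⟩
      obtain ⟨q₀, hq₀⟩ := hcne
      have hq₀S := hSmem _ (hcS hq₀)
      rw [hS_def]
      refine ⟨?_, fun x hx => Set.mem_sUnion.mpr ⟨q₀, hq₀, hq₀S.2.1 hx⟩, ?_⟩
      · constructor
        · rintro x y hx hy
          obtain ⟨q₁, hq₁, hxq⟩ := Set.mem_sUnion.mp hx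
          obtain ⟨q₂, hq₂, hyq⟩ := Set.mem_sUnion.mp hy
          rcases eq_or_ne q₁ q₂ with rfl | hne
          · exact Set.mem_sUnion.mpr ⟨q₁, hq₁, ((hSmem _ (hcS hq₁)).1).add_mem hxq hyq⟩
          · rcases hchain hq₁ hq₂ hne with hle | hle
            · exact Set.mem_sUnion.mpr ⟨q₂, hq₂, ((hSmem _ (hcS hq₂)).1).add_mem (hle hxq) hyq⟩
            · exact Set.mem_sUnion.mpr ⟨q₁, hq₁, ((hSmem _ (hcS hq₁)).1).add_mem hxq (hle hyq)⟩
        · rintro ρ x hρ hx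
          obtain ⟨q₁, hq₁, hxq⟩ := Set.mem_sUnion.mp hx
          exact Set.mem_sUnion.mpr ⟨q₁, hq₁, ((hSmem _ (hcS hq₁)).1).sos_mul_mem hρ hxq⟩
        · exact Set.mem_sUnion.mpr ⟨q₀, hq₀, hq₀S.1.one_mem⟩
      · intro hbad
        obtain ⟨q₁, hq₁, hxq⟩ := Set.mem_sUnion.mp hbad
        exact ((hSmem _ (hcS hq₁)).2.2) hxq
    obtain ⟨Qm, hQmsub, hQmmax⟩ := zorn_subset_nonempty S hchainub M₂ hM₂S
    have hQmS : Qm ∈ S := hQmmax.1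
    rw [hS_def] at hQmS
    obtain ⟨hQmQM, hM₂Qm, hQmproper⟩ := hQmS
    have harchQ : ∀ q : A, ∃ c : ℝ, 2 ≤ c ∧ C c - q ∈ Qm ∧ C c + q ∈ Qm := by
      intro q
      obtain ⟨c, hc2, h1, h2⟩ := harch q
      exact ⟨c, hc2, hM₂Qm (hMM₂ h1), hM₂Qm (hMM₂ h2)⟩
    -- Qm is a semiordering
    have hsemi : ∀ x : A, x ∈ Qm ∨ -x ∈ Qm := by
      intro x
      by_contra hboth
      push_neg at hboth
      obtain ⟨hx1, hx2⟩ := hboth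
      have himpSide : ∀ (e : A), e ∉ Qm →
          (-1 : A) ∈ {y | ∃ q ∈ Qm, ∃ σ, IsSOS σ ∧ y = q + σ * e} := by
        intro e he
        obtain ⟨Qp, hQp_def⟩ : ∃ Qp : Set A,
            Qp = {y | ∃ q ∈ Qm, ∃ σ, IsSOS σ ∧ y = q + σ * e} := ⟨_, rfl⟩
        rw [← hQp_def]
        by_contra hQpP
        have hQpQM : IsQM Qp := by
          constructor
          · rintro x y hx hy
            rw [hQp_def] at hx hy ⊢
            obtain ⟨x₁, hx₁, σ, hσ, rfl⟩ := hx
            obtain ⟨y₁, hy₁, τ, hτ, rfl⟩ := hy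
            exact ⟨x₁ + y₁, hQmQM.add_mem hx₁ hy₁, σ + τ, isSOS_add hσ hτ, by ring⟩
          · rintro ρ x hρ hx
            rw [hQp_def] at hx ⊢
            obtain ⟨x₁, hx₁, σ, hσ, rfl⟩ := hx
            exact ⟨ρ * x₁, hQmQM.sos_mul_mem hρ hx₁, ρ * σ, isSOS_mul hρ hσ, by ring⟩
          · rw [hQp_def]
            exact ⟨1, hQmQM.one_mem, 0, isSOS_zero, by ring⟩
        have hQmQp : Qm ⊆ Qp := by
          intro z hz
          rw [hQp_def]
          exact ⟨z, hz, 0, isSOS_zero, by ring⟩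
        have heQp : e ∈ Qp := by
          rw [hQp_def]
          exact ⟨0, hQmQM.zero_mem, 1, isSOS_one, by ring⟩
        have hQpS : Qp ∈ S := by
          rw [hS_def]
          exact ⟨hQpQM, fun z hz => hQmQp (hM₂Qm hz), hQpP⟩
        have := hQmmax.2 hQpS hQmQp
        exact he (this heQp)
      obtain ⟨q, hq, σ, hσ, h1⟩ := himpSide x hx1
      obtain ⟨q', hq', σ', hσ', h1'⟩ := himpSide (-x) hx2
      obtain ⟨l, hl2, hlx, hlx'⟩ := harchQ x
      have hl0 : (0:ℝ) < l := by linarith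
      have t1 : σ * C l - 1 ∈ Qm := by
        refine hQmQM.mem_of_eq ?_
          (hQmQM.add_mem hq (hQmQM.sos_mul_mem hσ hlx'))
        linear_combination h1
      have t2 : σ' * C l - 1 ∈ Qm := by
        refine hQmQM.mem_of_eq ?_
          (hQmQM.add_mem hq' (hQmQM.sos_mul_mem hσ' hlx))
        linear_combination h1'
      have t3 : σ * q' + σ' * q ∈ Qm :=
        hQmQM.add_mem (hQmQM.sos_mul_mem hσ hq') (hQmQM.sos_mul_mem hσ' hq)
      have hneg2 : (C (-2) : A) ∈ Qm := by
        refine hQmQM.mem_of_eq ?_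
          (hQmQM.add_mem (hQmQM.add_mem t1 t2) (hQmQM.smul_mem hl0.le t3))
        rw [map_neg, map_ofNat]
        linear_combination (C l * σ') * h1 + (C l * σ) * h1'
      apply hQmproper
      have h2' : (C (2:ℝ) : A) * (-1) ∈ Qm := by
        refine hQmQM.mem_of_eq ?_ hneg2
        rw [map_neg, map_ofNat]
        ring
      exact hQmQM.smul_cancel (by norm_num : (0:ℝ) < 2) h2'
    have hS' : Semiord Qm := ⟨hQmQM, harchQ, hQmproper, hsemi⟩
    -- the evaluation point
    obtain ⟨pt, hpt_def⟩ : ∃ pt : Fin n → ℝ, pt = fun i => alph Qm (X i) := ⟨_, rfl⟩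
    have hFeq : ∀ q : A, alph Qm q = eval pt q := by
      have hhom : (⟨⟨⟨alph Qm, by have := hS'.a_C 1; rwa [C_1] at this⟩,
          hS'.a_mul⟩, by have := hS'.a_C 0; rwa [C_0] at this, hS'.a_add⟩ :
          A →+* ℝ) = eval pt := by
        apply MvPolynomial.ringHom_ext
        · intro r
          simpa using hS'.a_C r
        · intro i
          simp [hpt_def]
      intro q
      exact RingHom.congr_fun hhom q
    have hgK : ∀ i, 0 ≤ eval pt (g i) := by
      intro i
      rw [← hFeq]
      exact hS'.a_nonneg (hM₂Qm (hMM₂ (g_mem_MSet g i)))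
    have hppos := hp pt hgK
    have haneg : alph Qm a ≤ 0 := by
      have h0 := hS'.a_nonneg (hM₂Qm hnegA)
      rw [hS'.a_neg] at h0
      linarith
    rw [hFeq, ha_def] at haneg
    rw [map_add, eval_C] at haneg
    linarith


end PutinarAux

open PutinarAux in
/-- Putinar's Positivstellensatz: under the Archimedean condition
(`N − Σ xᵢ²` lies in the quadratic module generated by the `gᵢ`), every polynomial `f`
strictly positive on `S_G` lies in the quadratic module, i.e.
`f = σ₀ + Σ σᵢ·gᵢ` with all `σ`'s SOS. -/
theorem putinar_positivstellensatz {n m : ℕ}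
    (f : MvPolynomial (Fin n) ℝ) (g : Fin m → MvPolynomial (Fin n) ℝ)
    (harch : ∃ (N : ℝ) (τ₀ : MvPolynomial (Fin n) ℝ)
        (τ : Fin m → MvPolynomial (Fin n) ℝ),
      IsSOS τ₀ ∧ (∀ i, IsSOS (τ i)) ∧
      C N - ∑ i : Fin n, X i ^ 2 = τ₀ + ∑ i, τ i * g i)
    (hpos : ∀ x : Fin n → ℝ, (∀ i, 0 ≤ eval x (g i)) → 0 < eval x f) :
    ∃ (σ₀ : MvPolynomial (Fin n) ℝ) (σ : Fin m → MvPolynomial (Fin n) ℝ),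
      IsSOS σ₀ ∧ (∀ i, IsSOS (σ i)) ∧ f = σ₀ + ∑ i, σ i * g i := by
  classical
  obtain ⟨N, τ₀, τ, hτ₀, hτ, hNeq⟩ := harch
  have hNX : (C N : MvPolynomial (Fin n) ℝ) - ∑ i : Fin n, X i ^ 2 ∈ MSet g :=
    ⟨τ₀, τ, hτ₀, hτ, hNeq⟩
  have hcont : ∀ q : MvPolynomial (Fin n) ℝ, Continuous fun x : Fin n → ℝ => eval x q := by
    intro q
    induction q using MvPolynomial.induction_on with
    | C a => simpa only [eval_C] using (continuous_const : Continuous fun _ : Fin n → ℝ => a)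
    | add p q hp hq => simpa only [map_add, Pi.add_def] using hp.add hq
    | mul_X p i hp => simpa only [map_mul, eval_X, Pi.mul_def] using hp.mul (continuous_apply i)
  obtain ⟨K, hK_def⟩ : ∃ K : Set (Fin n → ℝ),
      K = {x | ∀ i, 0 ≤ eval x (g i)} := ⟨_, rfl⟩
  rcases Set.eq_empty_or_nonempty K with hKe | hKne
  · -- S_G is empty
    have hp : ∀ x : Fin n → ℝ, (∀ i, 0 ≤ eval x (g i)) → 0 < eval x (f - C 1) := by
      intro x hx
      exfalso
      have hxK : x ∈ K := by rw [hK_def]; exact hx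
      rw [hKe] at hxK
      exact Set.notMem_empty x hxK
    obtain ⟨σ₀, σ, h₀, h₁, h₂⟩ := star g hNX (f - C 1) hp 1 one_pos
    exact ⟨σ₀, σ, h₀, h₁, by linear_combination h₂⟩
  · -- S_G nonempty: it is compact, take the minimum of f
    have hKclosed : IsClosed K := by
      rw [hK_def, Set.setOf_forall]
      exact isClosed_iInter fun i => isClosed_le continuous_const (hcont (g i))
    have hKsub : K ⊆ Metric.closedBall 0 (Real.sqrt (max N 0)) := by
      intro x hx
      rw [hK_def] at hx
      have hevalN : (∑ j : Fin n, (x j)^2) ≤ N := by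
        have h0 : 0 ≤ eval x (C N - ∑ i : Fin n, X i ^ 2) := by
          rw [hNeq, map_add, map_sum]
          have h1 : 0 ≤ eval x τ₀ := eval_isSOS_nonneg hτ₀ x
          have h2 : 0 ≤ ∑ i, eval x (τ i * g i) :=
            Finset.sum_nonneg fun i _ => by
              rw [map_mul]; exact mul_nonneg (eval_isSOS_nonneg (hτ i) x) (hx i)
          linarith
        rw [map_sub, eval_C, map_sum] at h0
        simp only [map_pow, eval_X] at h0
        linarith
      rw [Metric.mem_closedBall, dist_zero_right,
        pi_norm_le_iff_of_nonneg (Real.sqrt_nonneg _)]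
      intro i
      rw [Real.norm_eq_abs]
      apply Real.abs_le_sqrt
      calc (x i)^2 ≤ ∑ j : Fin n, (x j)^2 :=
            Finset.single_le_sum (fun j _ => sq_nonneg (x j)) (Finset.mem_univ i)
        _ ≤ N := hevalN
        _ ≤ max N 0 := le_max_left N 0
    have hKcompact : IsCompact K :=
      Metric.isCompact_of_isClosed_isBounded hKclosed
        (Metric.isBounded_closedBall.subset hKsub)
    obtain ⟨x₀, hx₀K, hmin⟩ := hKcompact.exists_isMinOn hKne (hcont f).continuousOn
    have hx₀pos : 0 < eval x₀ f := hpos x₀ (by rw [hK_def] at hx₀K; exact hx₀K)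
    obtain ⟨μ, hμ⟩ : ∃ μ : ℝ, μ = eval x₀ f / 2 := ⟨_, rfl⟩
    have hμ0 : 0 < μ := by rw [hμ]; linarith
    have hp : ∀ x : Fin n → ℝ, (∀ i, 0 ≤ eval x (g i)) → 0 < eval x (f - C μ) := by
      intro x hx
      have hxK : x ∈ K := by rw [hK_def]; exact hx
      have hle : eval x₀ f ≤ eval x f := isMinOn_iff.mp hmin x hxK
      rw [map_sub, eval_C, hμ]
      linarith
    obtain ⟨σ₀, σ, h₀, h₁, h₂⟩ := star g hNX (f - C μ) hp μ hμ0
    exact ⟨σ₀, σ, h₀, h₁, by linear_combination h₂⟩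
end

section
/- (Asymptotic convergence of the dense hierarchy, Proposition 1 (a)–(b) in dense form.) Let f, g_1, …, g_m be real polynomials in n variables such that the Archimedean condition holds (there exist N ∈ ℝ and SOS polynomials τ_0, …, τ_m with N − Σ_{i=1}^n x_i² = τ_0 + Σ_i τ_i·g_i) and such that S_G is nonempty. Let f* = inf_{x ∈ S_G} f(x), which is finite since S_G is compact under the Archimedean condition. Then for every ε > 0 there exist SOS polynomials σ_0, …, σ_m with f − (f* − ε) = σ_0 + Σ_{i=1}^m σ_i·g_i. Consequently the supremum over all hierarchy levels r of the level-r SOS relaxation value equals f*, and the hierarchy values increase monotonically to the global minimum. -/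
open MvPolynomial

namespace Putinar

variable {n : ℕ}

abbrev Poly (n : ℕ) := MvPolynomial (Fin n) ℝ

lemma sos_zero : IsSOS (0 : Poly n) := ⟨0, ![], by simp⟩

lemma sos_sq (p : Poly n) : IsSOS (p ^ 2) := ⟨1, ![p], by simp⟩

lemma sos_one : IsSOS (1 : Poly n) := by simpa using sos_sq (1 : Poly n)

lemma sos_add {a b : Poly n} (ha : IsSOS a) (hb : IsSOS b) : IsSOS (a + b) := by
  obtain ⟨k, h, rfl⟩ := ha
  obtain ⟨k', h', rfl⟩ := hb
  refine ⟨k + k', Fin.addCases h h', ?_⟩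
  rw [Fin.sum_univ_add]
  simp

lemma sos_sq_mul {a : Poly n} (p : Poly n) (ha : IsSOS a) : IsSOS (p ^ 2 * a) := by
  obtain ⟨k, h, rfl⟩ := ha
  refine ⟨k, fun j => p * h j, ?_⟩
  rw [Finset.mul_sum]
  congr 1; ext j; ring_nf

lemma C_sq_sqrt {c : ℝ} (hc : 0 ≤ c) : (C (Real.sqrt c) : Poly n) ^ 2 = C c := by
  rw [← C_pow, Real.sq_sqrt hc]

lemma sos_const {c : ℝ} (hc : 0 ≤ c) : IsSOS (C c : Poly n) := by
  rw [← C_sq_sqrt (n := n) hc]; exact sos_sq _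

lemma sos_smul {c : ℝ} (hc : 0 ≤ c) {a : Poly n} (ha : IsSOS a) : IsSOS (C c * a) := by
  rw [← C_sq_sqrt (n := n) hc]; exact sos_sq_mul _ ha

/-- Quadratic module. -/
structure IsQM (M : Set (Poly n)) : Prop where
  one_mem : (1 : Poly n) ∈ M
  add_mem : ∀ {u v : Poly n}, u ∈ M → v ∈ M → u + v ∈ M
  sq_mul_mem : ∀ (p : Poly n) {u : Poly n}, u ∈ M → p ^ 2 * u ∈ M

namespace IsQM

variable {M : Set (Poly n)}

lemma sq_mem (hM : IsQM M) (p : Poly n) : p ^ 2 ∈ M := by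
  simpa using hM.sq_mul_mem p hM.one_mem

lemma smul_mem (hM : IsQM M) {c : ℝ} (hc : 0 ≤ c) {u : Poly n} (hu : u ∈ M) : C c * u ∈ M := by
  rw [← C_sq_sqrt (n := n) hc]; exact hM.sq_mul_mem _ hu

lemma const_mem (hM : IsQM M) {c : ℝ} (hc : 0 ≤ c) : (C c : Poly n) ∈ M := by
  simpa using hM.smul_mem hc hM.one_mem

lemma zero_mem (hM : IsQM M) : (0 : Poly n) ∈ M := by
  simpa using hM.const_mem le_rfl

lemma sum_mem (hM : IsQM M) {ι : Type*} {s : Finset ι} {f : ι → Poly n}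
    (h : ∀ i ∈ s, f i ∈ M) : ∑ i ∈ s, f i ∈ M := by
  classical
  induction s using Finset.induction_on with
  | empty => simpa using hM.zero_mem
  | @insert a s' hx ih =>
      rw [Finset.sum_insert hx]
      exact hM.add_mem (h a (Finset.mem_insert_self a s'))
        (ih fun i hi => h i (Finset.mem_insert_of_mem hi))

lemma sos_mem (hM : IsQM M) {a : Poly n} (ha : IsSOS a) : a ∈ M := by
  obtain ⟨k, h, rfl⟩ := ha
  exact hM.sum_mem fun j _ => hM.sq_mem (h j)

lemma sos_mul_mem (hM : IsQM M) {a u : Poly n} (ha : IsSOS a) (hu : u ∈ M) : a * u ∈ M := by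
  obtain ⟨k, h, rfl⟩ := ha
  rw [Finset.sum_mul]
  exact hM.sum_mem fun j _ => hM.sq_mul_mem (h j) hu

end IsQM

/-- Archimedean property. -/
def IsArch (M : Set (Poly n)) : Prop := ∀ p : Poly n, ∃ N : ℝ, C N - p ∈ M

end Putinar

namespace Putinar

variable {n : ℕ} {M : Set (Poly n)}

/-- two-sided bound -/
def Bdd (M : Set (Poly n)) (p : Poly n) : Prop :=
  ∃ N : ℝ, C N - p ∈ M ∧ C N + p ∈ M

lemma bdd_mono (hM : IsQM M) {p : Poly n} {N N' : ℝ} (h : N ≤ N')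
    (h1 : C N - p ∈ M) : C N' - p ∈ M := by
  have : C N' - p = C (N' - N) + (C N - p) := by
    rw [C_sub]; ring
  rw [this]
  exact hM.add_mem (hM.const_mem (by linarith)) h1

lemma bdd_neg (hM : IsQM M) {p : Poly n} (h : Bdd M p) : Bdd M (-p) := by
  obtain ⟨N, h1, h2⟩ := h
  refine ⟨N, ?_, ?_⟩
  · rw [sub_neg_eq_add]; exact h2
  · rw [← sub_eq_add_neg]; exact h1

lemma bdd_add (hM : IsQM M) {p q : Poly n} (hp : Bdd M p) (hq : Bdd M q) :
    Bdd M (p + q) := by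
  obtain ⟨N1, h1, h2⟩ := hp
  obtain ⟨N2, h3, h4⟩ := hq
  refine ⟨N1 + N2, ?_, ?_⟩
  · have : C (N1 + N2) - (p + q) = (C N1 - p) + (C N2 - q) := by rw [C_add]; ring
    rw [this]; exact hM.add_mem h1 h3
  · have : C (N1 + N2) + (p + q) = (C N1 + p) + (C N2 + q) := by rw [C_add]; ring
    rw [this]; exact hM.add_mem h2 h4

/-- From both-sided linear bounds get a bound on the square. -/
lemma sq_bound (hM : IsQM M) {p : Poly n} {k : ℝ} (hk : 0 < k)
    (h1 : C k - p ∈ M) (h2 : C k + p ∈ M) : C (k ^ 2) - p ^ 2 ∈ M := by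
  have m1 : (C (Real.sqrt (1 / (2 * k))) * (C k + p)) ^ 2 * (C k - p) ∈ M :=
    hM.sq_mul_mem _ h1
  have m2 : (C (Real.sqrt (1 / (2 * k))) * (C k - p)) ^ 2 * (C k + p) ∈ M :=
    hM.sq_mul_mem _ h2
  have key : C (k ^ 2) - p ^ 2 =
      (C (Real.sqrt (1 / (2 * k))) * (C k + p)) ^ 2 * (C k - p) +
      (C (Real.sqrt (1 / (2 * k))) * (C k - p)) ^ 2 * (C k + p) := by
    have hs : (C (Real.sqrt (1 / (2 * k))) : Poly n) ^ 2 = C (1 / (2 * k)) :=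
      C_sq_sqrt (by positivity)
    have hinv : (C (1 / (2 * k)) : Poly n) * (2 * C k) = 1 := by
      have : (2 : Poly n) = C 2 := (map_ofNat C 2).symm
      rw [this, ← C_mul, ← C_mul, ← C_1]
      congr 1
      field_simp
    rw [C_pow]
    linear_combination (-(C k ^ 2 - p ^ 2) : Poly n) * hinv -
      ((C k + p) ^ 2 * (C k - p) + (C k - p) ^ 2 * (C k + p)) * hs
  rw [key]
  exact hM.add_mem m1 m2

/-- From a bound on the square get two-sided linear bounds. -/
lemma linear_of_sq_bound (hM : IsQM M) {p : Poly n} {k : ℝ}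
    (h : C k - p ^ 2 ∈ M) : Bdd M p := by
  refine ⟨k + 4⁻¹, ?_, ?_⟩
  · have key : C (k + 4⁻¹) - p = (C k - p ^ 2) + (C 2⁻¹ - p) ^ 2 := by
      have h1 : ((C 2⁻¹ : Poly n)) ^ 2 = C 4⁻¹ := by
        rw [← C_pow]; norm_num
      have h2 : (2 : Poly n) * C 2⁻¹ = 1 := by
        have : (2 : Poly n) = C 2 := (map_ofNat C 2).symm
        rw [this, ← C_mul, ← C_1]; norm_num
      rw [C_add]
      linear_combination (-1 : Poly n) * h1 + p * h2
    rw [key]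
    exact hM.add_mem h (hM.sq_mem _)
  · have key : C (k + 4⁻¹) + p = (C k - p ^ 2) + (C 2⁻¹ + p) ^ 2 := by
      have h1 : ((C 2⁻¹ : Poly n)) ^ 2 = C 4⁻¹ := by
        rw [← C_pow]; norm_num
      have h2 : (2 : Poly n) * C 2⁻¹ = 1 := by
        have : (2 : Poly n) = C 2 := (map_ofNat C 2).symm
        rw [this, ← C_mul, ← C_1]; norm_num
      rw [C_add]
      linear_combination (-1 : Poly n) * h1 - p * h2
    rw [key]
    exact hM.add_mem h (hM.sq_mem _)

lemma bdd_nonneg_N (hM : IsQM M) {p : Poly n} (h : Bdd M p) :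
    ∃ N : ℝ, 0 < N ∧ C N - p ∈ M ∧ C N + p ∈ M := by
  obtain ⟨N, h1, h2⟩ := h
  refine ⟨max N 1, lt_of_lt_of_le one_pos (le_max_right _ _), ?_, ?_⟩
  · exact bdd_mono hM (le_max_left _ _) h1
  · have : C (max N 1) + p = C (max N 1) - (-p) := by ring
    rw [this]
    exact bdd_mono hM (le_max_left _ _) (by simpa using h2)

lemma bdd_mul (hM : IsQM M) {p q : Poly n} (hp : Bdd M p) (hq : Bdd M q) :
    Bdd M (p * q) := by
  obtain ⟨N1, hN1, h1, h2⟩ := bdd_nonneg_N hM hp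
  obtain ⟨N2, hN2, h3, h4⟩ := bdd_nonneg_N hM hq
  have hpq : Bdd M (p + q) := bdd_add hM ⟨N1, h1, h2⟩ ⟨N2, h3, h4⟩
  have hpq' : Bdd M (p - q) := by
    have := bdd_add hM (⟨N1, h1, h2⟩ : Bdd M p) (bdd_neg hM ⟨N2, h3, h4⟩)
    simpa [sub_eq_add_neg] using this
  obtain ⟨A, hA, a1, a2⟩ := bdd_nonneg_N hM hpq
  obtain ⟨B, hB, b1, b2⟩ := bdd_nonneg_N hM hpq'
  have s1 : C (A ^ 2) - (p + q) ^ 2 ∈ M := sq_bound hM hA a1 a2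
  have s2 : C (B ^ 2) - (p - q) ^ 2 ∈ M := sq_bound hM hB b1 b2
  set D := max (A ^ 2) (B ^ 2) with hD
  have s1' : C D - (p + q) ^ 2 ∈ M := bdd_mono hM (le_max_left _ _) s1
  have s2' : C D - (p - q) ^ 2 ∈ M := bdd_mono hM (le_max_right _ _) s2
  have four : (C D - 4 * (p * q)) ∈ M := by
    have : C D - 4 * (p * q) = (C D - (p + q) ^ 2) + (p - q) ^ 2 := by ring
    rw [this]; exact hM.add_mem s1' (hM.sq_mem _)
  have four' : (C D + 4 * (p * q)) ∈ M := by
    have : C D + 4 * (p * q) = (C D - (p - q) ^ 2) + (p + q) ^ 2 := by ring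
    rw [this]; exact hM.add_mem s2' (hM.sq_mem _)
  have hq4 : (C (4⁻¹ : ℝ) : Poly n) * 4 = 1 := by
    have : (4 : Poly n) = C 4 := (map_ofNat C 4).symm
    rw [this, ← C_mul, ← C_1]; norm_num
  refine ⟨D / 4, ?_, ?_⟩
  · have h5 : C (D / 4) - p * q = C 4⁻¹ * (C D - 4 * (p * q)) := by
      have : (D / 4 : ℝ) = 4⁻¹ * D := by ring
      rw [this, C_mul]
      linear_combination (p * q) * hq4
    rw [h5]
    exact hM.smul_mem (by norm_num) four
  · have h5 : C (D / 4) + p * q = C 4⁻¹ * (C D + 4 * (p * q)) := by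
      have : (D / 4 : ℝ) = 4⁻¹ * D := by ring
      rw [this, C_mul]
      linear_combination (-(p * q)) * hq4
    rw [h5]
    exact hM.smul_mem (by norm_num) four'

/-- If `C N - ∑ X i ^ 2 ∈ M` then every polynomial is two-sided bounded, so `M` is
Archimedean. -/
lemma arch_of_ball (hM : IsQM M) {N : ℝ}
    (hball : C N - ∑ i : Fin n, X i ^ 2 ∈ M) : IsArch M := by
  have hXi : ∀ i : Fin n, Bdd M (X i) := by
    intro i
    apply linear_of_sq_bound hM (k := N)
    have : C N - X i ^ 2 = (C N - ∑ j : Fin n, X j ^ 2) +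
        ∑ j ∈ Finset.univ.erase i, X j ^ 2 := by
      rw [← Finset.add_sum_erase _ _ (Finset.mem_univ i)]
      ring
    rw [this]
    exact hM.add_mem hball (hM.sum_mem fun j _ => hM.sq_mem _)
  have hall : ∀ p : Poly n, Bdd M p := by
    intro p
    induction p using MvPolynomial.induction_on with
    | C a =>
        refine ⟨|a|, ?_, ?_⟩
        · rw [← C_sub]; exact hM.const_mem (by cases abs_cases a <;> linarith)
        · rw [← C_add]; exact hM.const_mem (by cases abs_cases a <;> linarith)
    | add p q hp hq => exact bdd_add hM hp hq
    | mul_X p i hp => exact bdd_mul hM hp (hXi i)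
  intro p
  obtain ⟨N', h1, _⟩ := hall p
  exact ⟨N', h1⟩

end Putinar

namespace Putinar

variable {n : ℕ} {M : Set (Poly n)}

lemma arch_twosided (hM : IsQM M) (ha : IsArch M) (p : Poly n) :
    ∃ N : ℝ, 1 ≤ N ∧ C N - p ∈ M ∧ C N + p ∈ M := by
  obtain ⟨N1, h1⟩ := ha p
  obtain ⟨N2, h2⟩ := ha (-p)
  refine ⟨max (max N1 N2) 1, le_max_right _ _, ?_, ?_⟩
  · exact bdd_mono hM (le_trans (le_max_left _ _) (le_max_left _ _)) h1
  · rw [← sub_neg_eq_add]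
    exact bdd_mono hM (le_trans (le_max_right _ _) (le_max_left _ _)) h2

/-- Key lemma: in an Archimedean quadratic module, if `σ * b - 1 ∈ M` with `σ` SOS,
then `b ∈ M`. -/
lemma key_lemma (hM : IsQM M) (ha : IsArch M) {σ b : Poly n}
    (hσ : IsSOS σ) (h : σ * b - 1 ∈ M) : b ∈ M := by
  obtain ⟨k, hk1, hkσ, -⟩ := arch_twosided hM ha σ
  obtain ⟨k₂, hk₂1, hk₂σ, -⟩ := arch_twosided hM ha (σ ^ 2 * b)
  obtain ⟨N, hN1, -, hNb⟩ := arch_twosided hM ha b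
  set K := max k k₂ with hK
  have hK1 : 1 ≤ K := le_trans hk1 (le_max_left _ _)
  have hK0 : 0 < K := lt_of_lt_of_le one_pos hK1
  set t := K⁻¹ with ht
  have ht0 : 0 < t := inv_pos.mpr hK0
  have htk : t * k ≤ 1 := by
    rw [ht]
    rw [inv_mul_le_iff₀ hK0, mul_one]
    exact le_max_left _ _
  have htk₂ : t * k₂ ≤ 1 := by
    rw [ht]
    rw [inv_mul_le_iff₀ hK0, mul_one]
    exact le_max_right _ _
  -- descent step
  have descent : ∀ lam : ℝ, 0 ≤ lam → C lam + b ∈ M → C (lam - t) + b ∈ M := by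
    intro lam hlam hmem
    have m1 : (1 - C t * σ) ^ 2 * (C lam + b) ∈ M := hM.sq_mul_mem _ hmem
    have m2 : C (lam * t * (2 - t * k)) * σ ∈ M :=
      hM.smul_mem (mul_nonneg (mul_nonneg hlam ht0.le) (by linarith)) (hM.sos_mem hσ)
    have m3 : C (lam * t ^ 2) * (σ * (C k - σ)) ∈ M :=
      hM.smul_mem (by positivity) (hM.sos_mul_mem hσ hkσ)
    have m4 : C (2 * t) * (σ * b - 1) ∈ M := hM.smul_mem (by linarith) h
    have m5 : C (t ^ 2) * (C k₂ - σ ^ 2 * b) ∈ M := hM.smul_mem (by positivity) hk₂σ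
    have m6 : (C (t - t ^ 2 * k₂) : Poly n) ∈ M := hM.const_mem (by nlinarith [mul_nonneg ht0.le (sub_nonneg.mpr htk₂)])
    have key : C (lam - t) + b =
        (1 - C t * σ) ^ 2 * (C lam + b) + C (lam * t * (2 - t * k)) * σ +
        C (lam * t ^ 2) * (σ * (C k - σ)) + C (2 * t) * (σ * b - 1) +
        C (t ^ 2) * (C k₂ - σ ^ 2 * b) + C (t - t ^ 2 * k₂) := by
      simp only [C_sub, C_add, C_mul, C_pow, map_ofNat]
      ring
    rw [key]
    exact hM.add_mem (hM.add_mem (hM.add_mem (hM.add_mem (hM.add_mem m1 m2) m3) m4) m5) m6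
  have low : ∀ lam : ℝ, lam < 0 → C lam + b ∈ M → b ∈ M := by
    intro lam hlam hmem
    have : b = (C lam + b) + C (-lam) := by rw [C_neg]; ring
    rw [this]
    exact hM.add_mem hmem (hM.const_mem (by linarith))
  have iter : ∀ j : ℕ, C (N - j * t) + b ∈ M ∨ b ∈ M := by
    intro j
    induction j with
    | zero => left; simpa using hNb
    | succ j ih =>
        rcases ih with hmem | hb
        · by_cases hlam : 0 ≤ N - j * t
          · left
            have := descent _ hlam hmem
            have heq : N - (j : ℝ) * t - t = N - ((j : ℕ) + 1 : ℕ) * t := by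
              push_cast; ring
            rwa [heq] at this
          · right; exact low _ (by linarith) hmem
        · right; exact hb
  obtain ⟨j, hj⟩ := exists_nat_gt (N / t)
  rcases iter j with hmem | hb
  · refine low _ ?_ hmem
    have : N < j * t := by
      rw [div_lt_iff₀ ht0] at hj
      linarith
    linarith
  · exact hb

end Putinar

namespace Putinar

variable {n : ℕ}

/-- A "good" quadratic module: Archimedean, no negative constants, and semiordering. -/
structure Good (T : Set (Poly n)) : Prop where
  qm : IsQM T
  arch : IsArch T
  negconst : ∀ c : ℝ, c < 0 → (C c : Poly n) ∉ T
  semi : ∀ b : Poly n, b ∉ T → -b ∈ T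

variable {T : Set (Poly n)}

noncomputable def phiF (T : Set (Poly n)) (p : Poly n) : ℝ :=
  sInf {r : ℝ | C r - p ∈ T}

lemma phi_set_nonempty (h : Good T) (p : Poly n) :
    {r : ℝ | C r - p ∈ T}.Nonempty := h.arch p

lemma phi_set_bdd (h : Good T) (p : Poly n) :
    BddBelow {r : ℝ | C r - p ∈ T} := by
  obtain ⟨N, -, -, hN⟩ := arch_twosided h.qm h.arch p
  refine ⟨-N, fun r hr => ?_⟩
  by_contra hlt
  push_neg at hlt
  have : (C (r + N) : Poly n) ∈ T := by
    rw [C_add]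
    have e : C r + C N = (C r - p) + (C N + p) := by ring
    rw [e]
    exact h.qm.add_mem hr hN
  exact h.negconst _ (by linarith) this

lemma phi_le (h : Good T) {p : Poly n} {s : ℝ} (hs : C s - p ∈ T) : phiF T p ≤ s :=
  csInf_le (phi_set_bdd h p) hs

lemma phi_ub (h : Good T) (p : Poly n) {w : ℝ} (hw : phiF T p < w) : C w - p ∈ T := by
  obtain ⟨r, hr, hlt⟩ := Real.lt_sInf_add_pos (phi_set_nonempty h p)
    (show (0:ℝ) < w - phiF T p by linarith)
  have e : (C w : Poly n) - p = C (w - r) + (C r - p) := by rw [C_sub]; ring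
  rw [e]
  have hrw : sInf {r : ℝ | C r - p ∈ T} = phiF T p := rfl
  exact h.qm.add_mem (h.qm.const_mem (by linarith)) hr

lemma phi_lb (h : Good T) (p : Poly n) {r : ℝ} (hr : r < phiF T p) : p - C r ∈ T := by
  have hnot : C r - p ∉ T := fun hmem => absurd (phi_le h hmem) (by linarith)
  have := h.semi _ hnot
  rwa [neg_sub] at this

lemma phi_ge (h : Good T) {p : Poly n} {s : ℝ}
    (hs : ∀ r : ℝ, r < s → p - C r ∈ T) : s ≤ phiF T p := by
  refine le_csInf (phi_set_nonempty h p) fun q hq => ?_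
  by_contra hlt
  push_neg at hlt
  have hmid : p - C ((q + s) / 2) ∈ T := hs _ (by linarith)
  have : (C (q - (q + s) / 2) : Poly n) ∈ T := by
    rw [C_sub]
    have e : C q - C ((q+s)/2) = (C q - p) + (p - C ((q+s)/2)) := by ring
    rw [e]
    exact h.qm.add_mem hq hmid
  exact h.negconst _ (by linarith) this

lemma phi_const (h : Good T) (c : ℝ) : phiF T (C c) = c := by
  apply le_antisymm
  · exact phi_le h (by rw [← C_sub]; exact h.qm.const_mem (by linarith))
  · apply phi_ge h
    intro r hr
    rw [← C_sub]
    exact h.qm.const_mem (by linarith)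

lemma phi_add (h : Good T) (p q : Poly n) :
    phiF T (p + q) = phiF T p + phiF T q := by
  apply le_antisymm
  · apply le_of_forall_pos_le_add
    intro ε hε
    have hc : phiF T p + phiF T q + ε = (phiF T p + ε/2) + (phiF T q + ε/2) := by ring
    rw [hc]
    apply phi_le h
    have e : (C ((phiF T p + ε/2) + (phiF T q + ε/2)) : Poly n) - (p + q) =
        (C (phiF T p + ε/2) - p) + (C (phiF T q + ε/2) - q) := by
      rw [C_add]; ring
    rw [e]
    exact h.qm.add_mem (phi_ub h p (by linarith)) (phi_ub h q (by linarith))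
  · apply le_of_forall_pos_le_add
    intro ε hε
    by_contra hlt
    push_neg at hlt
    have A : C (phiF T (p + q) + ε/3) - (p + q) ∈ T := phi_ub h _ (by linarith)
    have B : p - C (phiF T p - ε/3) ∈ T := phi_lb h _ (by linarith)
    have D : q - C (phiF T q - ε/3) ∈ T := phi_lb h _ (by linarith)
    have : (C (phiF T (p+q) + ε/3 - (phiF T p - ε/3) - (phiF T q - ε/3)) : Poly n) ∈ T := by
      rw [C_sub, C_sub]
      have e : C (phiF T (p+q) + ε/3) - C (phiF T p - ε/3) - C (phiF T q - ε/3) =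
          (C (phiF T (p+q) + ε/3) - (p + q)) + (p - C (phiF T p - ε/3)) +
          (q - C (phiF T q - ε/3)) := by ring
      rw [e]
      exact h.qm.add_mem (h.qm.add_mem A B) D
    exact h.negconst _ (by linarith) this

lemma phi_zero (h : Good T) : phiF T 0 = 0 := by
  simpa using phi_const h 0

lemma phi_neg (h : Good T) (p : Poly n) : phiF T (-p) = - phiF T p := by
  have := phi_add h p (-p)
  simp only [add_neg_cancel, phi_zero h] at this
  linarith

lemma phi_sq (h : Good T) (p : Poly n) : phiF T (p ^ 2) = (phiF T p) ^ 2 := by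
  set v := phiF T p with hv
  apply le_antisymm
  · -- upper bound
    have hb : ∀ δ : ℝ, 0 < δ → δ ≤ 1 → phiF T (p^2) ≤ v^2 + (2*|v|+1)*δ := by
      intro δ hδ0 hδ1
      have hk : 0 < |v| + δ := by positivity
      have h1 : C (|v| + δ) - p ∈ T := phi_ub h p (by
        have := le_abs_self v; linarith)
      have h2 : C (|v| + δ) + p ∈ T := by
        have h2' : C (|v| + δ) - (-p) ∈ T := phi_ub h (-p) (by
          rw [phi_neg h]
          have := neg_abs_le v; linarith)
        rwa [sub_neg_eq_add] at h2'
      have := phi_le h (sq_bound h.qm hk h1 h2)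
      have habs : |v|^2 = v^2 := sq_abs v
      nlinarith
    apply le_of_forall_pos_le_add
    intro ε hε
    set c : ℝ := 2*|v|+1 with hc
    have hc0 : 0 < c := by positivity
    set δ : ℝ := min 1 (ε/c) with hδ
    have hδ0 : 0 < δ := lt_min one_pos (by positivity)
    have := hb δ hδ0 (min_le_left _ _)
    have hcd : c * δ ≤ ε := by
      have : δ ≤ ε / c := min_le_right _ _
      calc c * δ ≤ c * (ε / c) := by
            exact mul_le_mul_of_nonneg_left this hc0.le
        _ = ε := by field_simp
    linarith
  · -- lower bound
    apply phi_ge h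
    intro r hr
    rcases lt_trichotomy v 0 with hneg | hzero | hpos
    · set w : ℝ := (v^2+r)/(2*v) with hw
      have hCw : (C (-(2*v)) : Poly n) * C w = C (-(v^2+r)) := by
        rw [← C_mul]
        congr 1
        rw [hw]
        have h2vne : (2*v : ℝ) ≠ 0 := ne_of_lt (by linarith)
        field_simp
        linear_combination (-(r + v^2)) * (mul_inv_cancel₀ hneg.ne)
      have h2v : (C (-(2*v)) : Poly n) = -(2 * C v) := by
        rw [C_neg, C_mul, map_ofNat]
      have hvr : (C (-(v^2+r)) : Poly n) = -((C v)^2 + C r) := by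
        rw [C_neg, C_add, C_pow]
      have key : p^2 - C r = (p - C v)^2 + C (-(2*v)) * (C w - p) := by
        rw [mul_sub, hCw, hvr, h2v]
        ring
      rw [key]
      refine h.qm.add_mem (h.qm.sq_mem _) (h.qm.smul_mem (by linarith) ?_)
      apply phi_ub h
      rw [← hv, hw, lt_div_iff_of_neg (by linarith)]
      nlinarith
    · have key : p^2 - C r = (p - C v)^2 + C (-r) := by
        rw [hzero, map_zero, C_neg]
        ring
      rw [key]
      exact h.qm.add_mem (h.qm.sq_mem _) (h.qm.const_mem (by nlinarith))
    · set w : ℝ := (v^2+r)/(2*v) with hw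
      have hCw : (C (2*v) : Poly n) * C w = C (v^2+r) := by
        rw [← C_mul]
        congr 1
        rw [hw]
        have h2vne : (2*v : ℝ) ≠ 0 := ne_of_gt (by linarith)
        field_simp
      have h2v : (C (2*v) : Poly n) = 2 * C v := by
        rw [C_mul, map_ofNat]
      have hvr : (C (v^2+r) : Poly n) = (C v)^2 + C r := by
        rw [C_add, C_pow]
      have key : p^2 - C r = (p - C v)^2 + C (2*v) * (p - C w) := by
        rw [mul_sub, hCw, hvr, h2v]
        ring
      rw [key]
      refine h.qm.add_mem (h.qm.sq_mem _) (h.qm.smul_mem (by linarith) ?_)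
      apply phi_lb h
      rw [← hv, hw, div_lt_iff₀ (by linarith)]
      nlinarith

end Putinar

namespace Putinar

variable {n : ℕ} {T : Set (Poly n)}

lemma phi_mul (h : Good T) (p q : Poly n) :
    phiF T (p * q) = phiF T p * phiF T q := by
  have e : (p + q)^2 = (p*q + p*q + p*q + p*q) + (p - q)^2 := by ring
  have h1 : phiF T ((p+q)^2) = (phiF T p + phiF T q)^2 := by
    rw [phi_sq h, phi_add h]
  have h2 : phiF T ((p+q)^2) =
      4 * phiF T (p*q) + (phiF T p - phiF T q)^2 := by
    rw [e]
    have hd : (p - q)^2 = (p + (-q))^2 := by ring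
    rw [phi_add h, phi_add h, phi_add h, phi_add h, hd, phi_sq h, phi_add h, phi_neg h]
    ring
  have := h1.symm.trans h2
  linear_combination (-1/4 : ℝ) * this

lemma phi_nonneg (h : Good T) {q : Poly n} (hq : q ∈ T) : 0 ≤ phiF T q := by
  refine le_csInf (phi_set_nonempty h q) fun s hs => ?_
  by_contra hlt
  push_neg at hlt
  have : (C s : Poly n) ∈ T := by
    have e : (C s : Poly n) = (C s - q) + q := by ring
    rw [e]; exact h.qm.add_mem hs hq
  exact h.negconst _ hlt this

lemma phi_eval (h : Good T) (p : Poly n) :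
    eval (fun i => phiF T (X i)) p = phiF T p := by
  induction p using MvPolynomial.induction_on with
  | C a => rw [eval_C, phi_const h]
  | add p q hp hq => rw [map_add, phi_add h, hp, hq]
  | mul_X p i hp => rw [map_mul, phi_mul h, hp, eval_X]

/-- Putinar's Positivstellensatz, abstract membership form. -/
theorem putinar {M : Set (Poly n)} (hM : IsQM M) (ha : IsArch M) {a : Poly n}
    (hpos : ∀ x : Fin n → ℝ, (∀ q ∈ M, 0 ≤ eval x q) → 0 < eval x a) : a ∈ M := by
  by_contra hnot
  -- M₁ = M - a·Σ²
  set M₁ : Set (Poly n) := {u | ∃ v ∈ M, ∃ σ, IsSOS σ ∧ u = v - σ * a} with hM₁def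
  have hM₁ : IsQM M₁ := by
    constructor
    · exact ⟨1, hM.one_mem, 0, sos_zero, by ring⟩
    · rintro u u' ⟨v, hv, σ, hσ, rfl⟩ ⟨v', hv', σ', hσ', rfl⟩
      exact ⟨v + v', hM.add_mem hv hv', σ + σ', sos_add hσ hσ', by ring⟩
    · rintro p u ⟨v, hv, σ, hσ, rfl⟩
      exact ⟨p^2 * v, hM.sq_mul_mem _ hv, p^2 * σ, sos_sq_mul _ hσ, by ring⟩
  have hMM₁ : M ⊆ M₁ := fun v hv => ⟨v, hv, 0, sos_zero, by ring⟩
  have hnega : -a ∈ M₁ := ⟨0, hM.zero_mem, 1, sos_one, by ring⟩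
  have hM₁proper : (C (-1) : Poly n) ∉ M₁ := by
    rintro ⟨v, hv, σ, hσ, hveq⟩
    apply hnot
    refine key_lemma hM ha hσ ?_
    have : σ * a - 1 = v := by
      rw [C_neg, C_1] at hveq
      linear_combination hveq
    rw [this]; exact hv
  -- Zorn
  set S : Set (Set (Poly n)) :=
    {T' | IsQM T' ∧ M₁ ⊆ T' ∧ (C (-1) : Poly n) ∉ T'} with hSdef
  have hubc : ∀ c ⊆ S, IsChain (· ⊆ ·) c → c.Nonempty → ∃ ub ∈ S, ∀ s ∈ c, s ⊆ ub := by
    intro c hcS hchain hcne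
    obtain ⟨T₀, hT₀⟩ := hcne
    refine ⟨⋃₀ c, ⟨?_, ?_, ?_⟩, fun s hs => Set.subset_sUnion_of_mem hs⟩
    · constructor
      · exact ⟨T₀, hT₀, (hcS hT₀).1.one_mem⟩
      · rintro u v ⟨T₁, hT₁, hu⟩ ⟨T₂, hT₂, hv⟩
        rcases hchain.total hT₁ hT₂ with hle | hle
        · exact ⟨T₂, hT₂, (hcS hT₂).1.add_mem (hle hu) hv⟩
        · exact ⟨T₁, hT₁, (hcS hT₁).1.add_mem hu (hle hv)⟩
      · rintro p u ⟨T₁, hT₁, hu⟩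
        exact ⟨T₁, hT₁, (hcS hT₁).1.sq_mul_mem p hu⟩
    · exact fun u hu => ⟨T₀, hT₀, (hcS hT₀).2.1 hu⟩
    · rintro ⟨T₁, hT₁, hmem⟩
      exact (hcS hT₁).2.2 hmem
  obtain ⟨T, hTsub, hTmax⟩ := zorn_subset_nonempty S hubc M₁ ⟨hM₁, le_rfl, hM₁proper⟩
  obtain ⟨hTQM, hTM₁, hTproper⟩ := hTmax.prop
  have hMT : M ⊆ T := le_trans hMM₁ hTM₁
  have hTarch : IsArch T := fun p => (ha p).imp fun N hN => hMT hN
  have hTneg : ∀ c : ℝ, c < 0 → (C c : Poly n) ∉ T := by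
    intro c hc hmem
    apply hTproper
    have he : (C (-1) : Poly n) = (C ((Real.sqrt (-c))⁻¹))^2 * C c := by
      rw [← C_pow, ← C_mul]
      congr 1
      rw [inv_pow, Real.sq_sqrt (by linarith)]
      rw [eq_comm, inv_mul_eq_div, div_eq_iff (by linarith : (-c : ℝ) ≠ 0)]
      ring
    rw [he]
    exact hTQM.sq_mul_mem _ hmem
  have hTsemi : ∀ b : Poly n, b ∉ T → -b ∈ T := by
    intro b hb
    set T' : Set (Poly n) := {u | ∃ v ∈ T, ∃ σ, IsSOS σ ∧ u = v + σ * b} with hT'def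
    have hT'QM : IsQM T' := by
      constructor
      · exact ⟨1, hTQM.one_mem, 0, sos_zero, by ring⟩
      · rintro u u' ⟨v, hv, σ, hσ, rfl⟩ ⟨v', hv', σ', hσ', rfl⟩
        exact ⟨v + v', hTQM.add_mem hv hv', σ + σ', sos_add hσ hσ', by ring⟩
      · rintro p u ⟨v, hv, σ, hσ, rfl⟩
        exact ⟨p^2 * v, hTQM.sq_mul_mem _ hv, p^2 * σ, sos_sq_mul _ hσ, by ring⟩
    have hTT' : T ⊆ T' := fun v hv => ⟨v, hv, 0, sos_zero, by ring⟩
    have hbT' : b ∈ T' := ⟨0, hTQM.zero_mem, 1, sos_one, by ring⟩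
    have himp : (C (-1) : Poly n) ∈ T' := by
      by_contra hcon
      have : T' ∈ S := ⟨hT'QM, le_trans hTM₁ hTT', hcon⟩
      exact hb (hTmax.le_of_ge this hTT' hbT')
    obtain ⟨v, hv, σ, hσ, hveq⟩ := himp
    refine key_lemma hTQM hTarch hσ ?_
    have : σ * (-b) - 1 = v := by
      rw [C_neg, C_1] at hveq
      linear_combination hveq
    rw [this]; exact hv
  have hGood : Good T := ⟨hTQM, hTarch, hTneg, hTsemi⟩
  set x : Fin n → ℝ := fun i => phiF T (X i) with hx
  have hxg : ∀ q ∈ M, 0 ≤ eval x q := by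
    intro q hq
    rw [hx, phi_eval hGood]
    exact phi_nonneg hGood (hMT hq)
  have hpos' : 0 < eval x a := hpos x hxg
  rw [hx, phi_eval hGood] at hpos'
  have : 0 ≤ phiF T (-a) := phi_nonneg hGood (hTM₁ hnega)
  rw [phi_neg hGood] at this
  linarith

end Putinar

namespace Putinar

lemma sos_eval_nonneg {n : ℕ} {s : Poly n} (hs : IsSOS s) (x : Fin n → ℝ) :
    0 ≤ eval x s := by
  obtain ⟨k, h, rfl⟩ := hs
  rw [map_sum]
  exact Finset.sum_nonneg fun j _ => by rw [map_pow]; positivity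

end Putinar

open Putinar in
/-- Asymptotic convergence of the dense hierarchy: under the Archimedean condition and
nonemptiness of `S_G`, with `f* = inf_{x ∈ S_G} f(x)`, for every `ε > 0` the value
`f* − ε` admits an SOS certificate, and the supremum over all hierarchy levels of the
relaxation values (i.e. over all `φ` admitting some SOS certificate) equals `f*`. -/
theorem dense_hierarchy_converges {n m : ℕ}
    (f : MvPolynomial (Fin n) ℝ) (g : Fin m → MvPolynomial (Fin n) ℝ)
    (harch : ∃ (N : ℝ) (τ₀ : MvPolynomial (Fin n) ℝ)
        (τ : Fin m → MvPolynomial (Fin n) ℝ),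
      IsSOS τ₀ ∧ (∀ i, IsSOS (τ i)) ∧
      C N - ∑ i : Fin n, X i ^ 2 = τ₀ + ∑ i, τ i * g i)
    (hne : ∃ x : Fin n → ℝ, ∀ i, 0 ≤ eval x (g i))
    (fstar : ℝ)
    (hfstar : IsGLB {y : ℝ | ∃ x : Fin n → ℝ,
      (∀ i, 0 ≤ eval x (g i)) ∧ eval x f = y} fstar) :
    (∀ ε : ℝ, 0 < ε →
      ∃ (σ₀ : MvPolynomial (Fin n) ℝ) (σ : Fin m → MvPolynomial (Fin n) ℝ),
        IsSOS σ₀ ∧ (∀ i, IsSOS (σ i)) ∧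
        f - C (fstar - ε) = σ₀ + ∑ i, σ i * g i) ∧
    sSup {φ : ℝ | ∃ (σ₀ : MvPolynomial (Fin n) ℝ)
        (σ : Fin m → MvPolynomial (Fin n) ℝ),
      IsSOS σ₀ ∧ (∀ i, IsSOS (σ i)) ∧ f - C φ = σ₀ + ∑ i, σ i * g i} = fstar := by
  classical
  set M₀ : Set (Poly n) := {u | ∃ (σ₀ : Poly n) (σ : Fin m → Poly n),
    IsSOS σ₀ ∧ (∀ i, IsSOS (σ i)) ∧ u = σ₀ + ∑ i, σ i * g i} with hM₀def
  have hM₀ : IsQM M₀ := by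
    constructor
    · exact ⟨1, 0, sos_one, fun i => sos_zero, by simp⟩
    · rintro u u' ⟨s0, s, h0, hs, rfl⟩ ⟨s0', s', h0', hs', rfl⟩
      refine ⟨s0 + s0', fun i => s i + s' i, sos_add h0 h0',
        fun i => sos_add (hs i) (hs' i), ?_⟩
      simp only [add_mul]
      rw [Finset.sum_add_distrib]
      ring
    · rintro p u ⟨s0, s, h0, hs, rfl⟩
      refine ⟨p^2 * s0, fun i => p^2 * s i, sos_sq_mul _ h0,
        fun i => sos_sq_mul _ (hs i), ?_⟩
      rw [mul_add, Finset.mul_sum]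
      ring_nf
  have hgM₀ : ∀ i, g i ∈ M₀ := by
    intro i
    refine ⟨0, fun j => if j = i then 1 else 0, sos_zero,
      fun j => by simp only []; split_ifs <;> [exact sos_one; exact sos_zero], ?_⟩
    rw [zero_add, Finset.sum_eq_single i]
    · simp
    · intro j _ hj; simp [hj]
    · intro hi; exact absurd (Finset.mem_univ i) hi
  have harch' : IsArch M₀ := by
    obtain ⟨N, τ₀, τ, hτ₀, hτ, heq⟩ := harch
    exact arch_of_ball hM₀ (by rw [heq]; exact ⟨τ₀, τ, hτ₀, hτ, rfl⟩)
  have main : ∀ ε : ℝ, 0 < ε →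
      ∃ (σ₀ : MvPolynomial (Fin n) ℝ) (σ : Fin m → MvPolynomial (Fin n) ℝ),
        IsSOS σ₀ ∧ (∀ i, IsSOS (σ i)) ∧
        f - C (fstar - ε) = σ₀ + ∑ i, σ i * g i := by
    intro ε hε
    have hmem : f - C (fstar - ε) ∈ M₀ := by
      apply putinar hM₀ harch'
      intro x hx
      have hxg : ∀ i, 0 ≤ eval x (g i) := fun i => hx _ (hgM₀ i)
      have hfl : fstar ≤ eval x f := hfstar.1 ⟨x, hxg, rfl⟩
      rw [map_sub, eval_C]
      linarith
    obtain ⟨s0, s, h0, hs, heq⟩ := hmem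
    exact ⟨s0, s, h0, hs, heq⟩
  refine ⟨main, ?_⟩
  set V : Set ℝ := {φ : ℝ | ∃ (σ₀ : MvPolynomial (Fin n) ℝ)
      (σ : Fin m → MvPolynomial (Fin n) ℝ),
    IsSOS σ₀ ∧ (∀ i, IsSOS (σ i)) ∧ f - C φ = σ₀ + ∑ i, σ i * g i} with hVdef
  have hub : ∀ φ ∈ V, φ ≤ fstar := by
    rintro φ ⟨s0, s, h0, hs, heq⟩
    refine hfstar.2 ?_
    rintro y ⟨x, hxg, rfl⟩
    have := congrArg (eval x) heq
    rw [map_sub, eval_C, map_add, map_sum] at this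
    have h1 : 0 ≤ eval x s0 := sos_eval_nonneg h0 x
    have h2 : 0 ≤ ∑ i, eval x (s i * g i) := by
      refine Finset.sum_nonneg fun i _ => ?_
      rw [map_mul]
      exact mul_nonneg (sos_eval_nonneg (hs i) x) (hxg i)
    linarith
  have hVne : V.Nonempty := by
    obtain ⟨s0, s, h0, hs, heq⟩ := main 1 one_pos
    exact ⟨fstar - 1, s0, s, h0, hs, heq⟩
  have hbdd : BddAbove V := ⟨fstar, hub⟩
  apply le_antisymm
  · exact csSup_le hVne hub
  · apply le_of_forall_pos_le_add
    intro ε hε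
    obtain ⟨s0, s, h0, hs, heq⟩ := main ε hε
    have : fstar - ε ≤ sSup V := le_csSup hbdd ⟨s0, s, h0, hs, heq⟩
    linarith
end

section
/- (Proposition 2: sparse order-1 relaxation is equivalent to the dense order-1 relaxation for the quadratic formulation.) Let f, g_1, …, g_m be real polynomials in n variables of total degree at most 2. Let I_1, …, I_p ⊆ {1,…,n} cover {1,…,n}, satisfy the running intersection property (for each k ≥ 2 there is s(k) < k with I_k ∩ (I_1 ∪ … ∪ I_{k−1}) ⊆ I_{s(k)}), and be such that every monomial of f and every constraint g_i is supported on some I_k. Then the supremum of φ ∈ ℝ admitting a dense order-1 certificate f − φ = σ_0 + Σ_i λ_i·g_i (σ_0 SOS of degree ≤ 2, λ_i ≥ 0 real constants) equals the supremum of φ ∈ ℝ admitting a sparse order-1 certificate f − φ = Σ_{k=1}^p σ_k + Σ_i λ_i·g_i (each σ_k SOS of degree ≤ 2 supported on I_k, λ_i ≥ 0 real constants). Hence [OP_2-SH_1]* is equivalent to [OP_2-H_1]* and thus to the Lavaei–Low dual SDP relaxation. -/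
open MvPolynomial RealInnerProductSpace Submodule

namespace SparseSOSAux

variable {n : ℕ}

/-! ### Indexing monomials of degree at most one -/

noncomputable def eOf (i : Option (Fin n)) : (Fin n →₀ ℕ) := i.elim 0 fun a => Finsupp.single a 1

def SOf (i : Option (Fin n)) : Finset (Fin n) := i.elim ∅ fun a => {a}

lemma support_eOf (i : Option (Fin n)) : (eOf i).support = SOf i := by
  cases i <;> simp [eOf, SOf, Finsupp.support_single_ne_zero]

lemma degree_eOf (i : Option (Fin n)) : ((eOf i).sum fun _ e => e) ≤ 1 := by
  cases i <;> simp [eOf]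

lemma degree_eOf' (i : Option (Fin n)) : ((eOf i).sum fun _ => id) ≤ 1 := by
  cases i <;> simp [eOf]

lemma toMultiset_injective :
    Function.Injective (Finsupp.toMultiset : (Fin n →₀ ℕ) → Multiset (Fin n)) :=
  Function.LeftInverse.injective Finsupp.toMultiset_toFinsupp

lemma toMultiset_eOf (i : Option (Fin n)) :
    Finsupp.toMultiset (eOf i) = i.elim 0 (fun a => {a}) := by
  cases i <;> simp [eOf]

lemma eOf_injective : Function.Injective (eOf (n := n)) := by
  intro i j h
  have h2 := congrArg Finsupp.toMultiset h
  rw [toMultiset_eOf, toMultiset_eOf] at h2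
  cases i <;> cases j <;> simp_all

lemma multiset_pair_eq {α : Type*} {a b c d : α}
    (h : ({a} : Multiset α) + {b} = {c} + {d}) :
    (a = c ∧ b = d) ∨ (a = d ∧ b = c) := by
  rw [Multiset.singleton_add, Multiset.singleton_add, Multiset.cons_eq_cons] at h
  rcases h with ⟨rfl, h2⟩ | ⟨hne, cs, h1, h2⟩
  · exact Or.inl ⟨rfl, Multiset.singleton_inj.mp h2⟩
  · rw [Multiset.singleton_eq_cons_iff] at h1
    obtain ⟨rfl, rfl⟩ := h1
    rw [Multiset.singleton_eq_cons_iff] at h2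
    exact Or.inr ⟨h2.1.symm, rfl⟩

lemma eOf_add_eq_iff {i i' j j' : Option (Fin n)} :
    eOf i + eOf i' = eOf j + eOf j' ↔ (i = j ∧ i' = j') ∨ (i = j' ∧ i' = j) := by
  constructor
  · intro h
    have h2 := congrArg Finsupp.toMultiset h
    rw [Finsupp.toMultiset_add, Finsupp.toMultiset_add, toMultiset_eOf, toMultiset_eOf,
      toMultiset_eOf, toMultiset_eOf] at h2
    cases i <;> cases i' <;> cases j <;> cases j' <;>
      simp_all [Multiset.singleton_add] <;>
      first
      | (exact multiset_pair_eq (by simpa [Multiset.singleton_add] using h2))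
      | (exact absurd (congrArg Multiset.card h2) (by simp))
  · rintro (⟨rfl, rfl⟩ | ⟨rfl, rfl⟩)
    · rfl
    · exact add_comm _ _

/-! ### The polynomial attached to a Gram family of vectors -/

noncomputable def gpoly {N : ℕ} (r : Option (Fin n) → EuclideanSpace ℝ (Fin N)) :
    MvPolynomial (Fin n) ℝ :=
  ∑ i : Option (Fin n), ∑ i' : Option (Fin n), monomial (eOf i + eOf i') ⟪r i, r i'⟫

lemma inner_eq_sum {N : ℕ} (x y : EuclideanSpace ℝ (Fin N)) :
    ⟪x, y⟫ = ∑ j, x j * y j := by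
  simp [PiLp.inner_apply, RCLike.inner_apply, mul_comm]

lemma gpoly_eq_sum_sq {N : ℕ} (r : Option (Fin n) → EuclideanSpace ℝ (Fin N)) :
    gpoly r = ∑ j : Fin N, (∑ i : Option (Fin n), monomial (eOf i) (r i j)) ^ 2 := by
  unfold gpoly
  have key : ∀ j : Fin N, (∑ i : Option (Fin n), monomial (eOf i) (r i j)) ^ 2
      = ∑ i : Option (Fin n), ∑ i' : Option (Fin n),
          monomial (eOf i + eOf i') (r i j * r i' j) := by
    intro j
    rw [sq, Finset.sum_mul_sum]
    exact Finset.sum_congr rfl fun i _ => Finset.sum_congr rfl fun i' _ => by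
      rw [monomial_mul]
  simp only [key]
  conv_rhs => rw [Finset.sum_comm]
  refine Finset.sum_congr rfl fun i _ => ?_
  conv_rhs => rw [Finset.sum_comm]
  refine Finset.sum_congr rfl fun i' _ => ?_
  rw [inner_eq_sum, ← map_sum]

lemma isSOS_gpoly {N : ℕ} (r : Option (Fin n) → EuclideanSpace ℝ (Fin N)) :
    IsSOS (gpoly r) :=
  ⟨N, fun j => ∑ i : Option (Fin n), monomial (eOf i) (r i j), gpoly_eq_sum_sq r⟩

lemma totalDegree_gpoly {N : ℕ} (r : Option (Fin n) → EuclideanSpace ℝ (Fin N)) :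
    (gpoly r).totalDegree ≤ 2 := by
  refine (totalDegree_finset_sum _ _).trans (Finset.sup_le fun i _ => ?_)
  refine (totalDegree_finset_sum _ _).trans (Finset.sup_le fun i' _ => ?_)
  refine (totalDegree_monomial_le _ _).trans ?_
  rw [Finsupp.sum_add_index (by simp) (by simp)]
  have := degree_eOf' i
  have := degree_eOf' i'
  omega

lemma vars_gpoly {N : ℕ} (r : Option (Fin n) → EuclideanSpace ℝ (Fin N))
    (s : Finset (Fin n)) (hr : ∀ a, a ∉ s → r (some a) = 0) :
    (gpoly r).vars ⊆ s := by
  refine (vars_sum_subset _ _).trans ?_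
  intro x hx
  simp only [Finset.mem_biUnion, Finset.mem_univ, true_and] at hx
  obtain ⟨i, hi⟩ := hx
  have hx2 := (vars_sum_subset _ _) hi
  simp only [Finset.mem_biUnion, Finset.mem_univ, true_and] at hx2
  obtain ⟨i', hi'⟩ := hx2
  by_cases hz : (⟪r i, r i'⟫ : ℝ) = 0
  · rw [hz] at hi'; simp at hi'
  · have hvm := vars_monomial (s := eOf i + eOf i') hz
    rw [hvm] at hi'
    have hx3 := Finsupp.support_add hi'
    have key : ∀ j : Option (Fin n), x ∈ (eOf j).support →
        ((⟪r j, r i'⟫ : ℝ) ≠ 0 ∨ (⟪r i, r j⟫ : ℝ) ≠ 0) → x ∈ s := by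
      intro j hj hnz
      rw [support_eOf] at hj
      cases j with
      | none => simp [SOf] at hj
      | some a =>
        simp [SOf] at hj
        subst hj
        by_contra hxs
        rcases hnz with h1 | h1 <;> [skip; skip] <;>
          · rw [hr _ hxs] at h1
            simp at h1
    rcases Finset.mem_union.mp hx3 with h | h
    · exact key i h (Or.inl hz)
    · exact key i' h (Or.inr hz)

lemma coeff_gpoly {N : ℕ} (r : Option (Fin n) → EuclideanSpace ℝ (Fin N))
    (d : Fin n →₀ ℕ) :
    coeff d (gpoly r) = ∑ i : Option (Fin n), ∑ i' : Option (Fin n),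
      (if eOf i + eOf i' = d then (⟪r i, r i'⟫ : ℝ) else 0) := by
  unfold gpoly
  rw [coeff_sum]
  refine Finset.sum_congr rfl fun i _ => ?_
  rw [coeff_sum]
  exact Finset.sum_congr rfl fun i' _ => coeff_monomial _ _ _

lemma pattern_of_support {N p : ℕ} {r : Option (Fin n) → EuclideanSpace ℝ (Fin N)}
    {I : Fin p → Finset (Fin n)}
    (hs : ∀ d ∈ (gpoly r).support, ∃ k, d.support ⊆ I k) :
    ∀ i i', (⟪r i, r i'⟫ : ℝ) ≠ 0 → ∃ k, SOf i ∪ SOf i' ⊆ I k := by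
  intro i i' hne
  set d := eOf i + eOf i' with hd
  have hcoeff : coeff d (gpoly r) =
      if i = i' then (⟪r i, r i'⟫ : ℝ) else 2 * ⟪r i, r i'⟫ := by
    rw [coeff_gpoly]
    by_cases hii : i = i'
    · subst hii
      rw [if_pos rfl]
      rw [Finset.sum_eq_single i]
      · rw [Finset.sum_eq_single i]
        · rw [if_pos rfl]
        · intro j' _ hj'
          rw [if_neg]
          rw [hd, eOf_add_eq_iff]
          push_neg
          exact ⟨fun _ => hj', fun _ => hj'⟩
        · simp
      · intro j _ hj
        apply Finset.sum_eq_zero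
        intro j' _
        rw [if_neg]
        rw [hd, eOf_add_eq_iff]
        push_neg
        constructor <;> intro h <;> exact absurd h hj
      · simp
    · rw [if_neg hii]
      have hsplit : ∀ j j' : Option (Fin n), (eOf j + eOf j' = d) ↔
          ((j, j') = (i, i') ∨ (j, j') = (i', i)) := by
        intro j j'
        rw [hd, eOf_add_eq_iff]
        constructor
        · rintro (⟨rfl, rfl⟩ | ⟨rfl, rfl⟩)
          · exact Or.inl rfl
          · exact Or.inr rfl
        · rintro (h | h) <;> (injection h with h1 h2; subst h1; subst h2)
          · exact Or.inl ⟨rfl, rfl⟩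
          · exact Or.inr ⟨rfl, rfl⟩
      rw [← Finset.sum_product']
      have hite : ∀ q : Option (Fin n) × Option (Fin n),
          (if eOf q.1 + eOf q.2 = d then (⟪r q.1, r q.2⟫ : ℝ) else 0)
          = if q ∈ ({(i, i'), (i', i)} : Finset _) then (⟪r q.1, r q.2⟫ : ℝ) else 0 := by
        intro q
        by_cases hq : q ∈ ({(i, i'), (i', i)} : Finset _)
        · rw [if_pos hq, if_pos (by rw [hsplit]; simpa using hq)]
        · rw [if_neg hq, if_neg (by rw [hsplit]; simpa using hq)]
      rw [Finset.sum_congr rfl fun q _ => hite q]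
      rw [Finset.sum_ite_mem, Finset.univ_product_univ, Finset.univ_inter]
      rw [Finset.sum_pair (by simp [Prod.ext_iff]; exact fun h => absurd h hii)]
      rw [real_inner_comm (r i') (r i)]
      ring
  have hdsupp : d ∈ (gpoly r).support := by
    rw [mem_support_iff, hcoeff]
    split_ifs
    · exact hne
    · exact mul_ne_zero two_ne_zero hne
  obtain ⟨k, hk⟩ := hs d hdsupp
  refine ⟨k, ?_⟩
  intro a ha
  apply hk
  rw [Finsupp.mem_support_iff]
  rcases Finset.mem_union.mp ha with h | h <;>
    [ (rw [← support_eOf] at h; have := Finsupp.mem_support_iff.mp h);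
      (rw [← support_eOf] at h; have := Finsupp.mem_support_iff.mp h)] <;>
    · rw [hd, Finsupp.add_apply]
      omega

lemma sum_gpoly {N pp : ℕ} (q : Fin pp → Option (Fin n) → EuclideanSpace ℝ (Fin N))
    (r : Option (Fin n) → EuclideanSpace ℝ (Fin N))
    (h : ∀ i i', ∑ k, (⟪q k i, q k i'⟫ : ℝ) = ⟪r i, r i'⟫) :
    ∑ k, gpoly (q k) = gpoly r := by
  unfold gpoly
  conv_lhs => rw [Finset.sum_comm]
  refine Finset.sum_congr rfl fun i _ => ?_
  conv_lhs => rw [Finset.sum_comm]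
  refine Finset.sum_congr rfl fun i' _ => ?_
  rw [← map_sum, h]

lemma sum_sq_eq_zero {k : ℕ} {q : Fin k → MvPolynomial (Fin n) ℝ}
    (h : ∑ j, q j ^ 2 = 0) : ∀ j, q j = 0 := by
  intro j
  apply MvPolynomial.funext
  intro x
  have h2 : ∑ j, (eval x (q j)) ^ 2 = 0 := by
    have := congrArg (eval x) h
    simpa [map_sum] using this
  have h3 := (Finset.sum_eq_zero_iff_of_nonneg (fun j _ => sq_nonneg (eval x (q j)))).mp h2
    j (Finset.mem_univ j)
  have := pow_eq_zero_iff (n := 2) (by norm_num) |>.mp h3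
  simp [this]

lemma sum_homogeneousComponent_of_le {p : MvPolynomial (Fin n) ℝ} {M : ℕ}
    (hp : p.totalDegree ≤ M) :
    ∑ c ∈ Finset.range (M + 1), homogeneousComponent c p = p := by
  ext d
  rw [coeff_sum]
  simp_rw [coeff_homogeneousComponent]
  rw [Finset.sum_ite_eq]
  split_ifs with hmem
  · rfl
  · simp only [Finset.mem_range, not_lt] at hmem
    symm
    apply coeff_eq_zero_of_totalDegree_lt
    have h2 : d.degree = ∑ i ∈ d.support, d i := rfl
    rw [← h2]
    omega
    
lemma deg_le_one_of_sq_sum {k : ℕ} (h : Fin k → MvPolynomial (Fin n) ℝ)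
    (hdeg : (∑ j, h j ^ 2).totalDegree ≤ 2) : ∀ j, (h j).totalDegree ≤ 1 := by
  obtain ⟨D, hD⟩ : ∃ D : ℕ, Finset.univ.sup (fun j => (h j).totalDegree) = D := ⟨_, rfl⟩
  have hle : ∀ j, (h j).totalDegree ≤ D := fun j => by
    rw [← hD]; exact Finset.le_sup (f := fun j => (h j).totalDegree) (Finset.mem_univ j)
  rcases le_or_gt D 1 with hD1 | hD1
  · exact fun j => (hle j).trans hD1
  exfalso
  have hmemh : ∀ (c c' : ℕ) (j : Fin k),
      homogeneousComponent c (h j) * homogeneousComponent c' (h j)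
        ∈ homogeneousSubmodule (Fin n) ℝ (c + c') := fun c c' j =>
    (homogeneousComponent_isHomogeneous c (h j)).mul
      (homogeneousComponent_isHomogeneous c' (h j))
  have hkey : homogeneousComponent (D + D) (∑ j, h j ^ 2)
      = ∑ j, (homogeneousComponent D (h j)) ^ 2 := by
    rw [map_sum]
    refine Finset.sum_congr rfl fun j _ => ?_
    have hsq : h j ^ 2 = ∑ c ∈ Finset.range (D + 1), ∑ c' ∈ Finset.range (D + 1),
        homogeneousComponent c (h j) * homogeneousComponent c' (h j) := by
      conv_lhs => rw [sq, ← sum_homogeneousComponent_of_le (hle j)]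
      rw [Finset.sum_mul_sum]
    rw [hsq, map_sum]
    have hterm : ∀ c ∈ Finset.range (D + 1),
        homogeneousComponent (D + D) (∑ c' ∈ Finset.range (D + 1),
          homogeneousComponent c (h j) * homogeneousComponent c' (h j))
        = ∑ c' ∈ Finset.range (D + 1),
            (if D + D = c + c' then
              homogeneousComponent c (h j) * homogeneousComponent c' (h j) else 0) := by
      intro c _
      rw [map_sum]
      exact Finset.sum_congr rfl fun c' _ => homogeneousComponent_of_mem (hmemh c c' j)
    rw [Finset.sum_congr rfl hterm]
    rw [Finset.sum_eq_single_of_mem D (Finset.mem_range.mpr (Nat.lt_succ_self D))]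
    · rw [Finset.sum_eq_single_of_mem D (Finset.mem_range.mpr (Nat.lt_succ_self D))]
      · rw [if_pos rfl, sq]
      · intro c' _ hc'
        rw [if_neg (by omega)]
    · intro c hc hcne
      apply Finset.sum_eq_zero
      intro c' hc'
      have h1 := Finset.mem_range.mp hc
      have h2 := Finset.mem_range.mp hc'
      rw [if_neg (by omega)]
  have hzero : homogeneousComponent (D + D) (∑ j, h j ^ 2) = 0 :=
    homogeneousComponent_eq_zero _ _ (by omega)
  rw [hkey] at hzero
  have hq0 := sum_sq_eq_zero hzero
  have hne : (Finset.univ : Finset (Fin k)).Nonempty := by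
    by_contra he
    rw [Finset.not_nonempty_iff_eq_empty] at he
    rw [← hD, he] at hD1
    simp at hD1
  obtain ⟨j0, _, hj0⟩ := Finset.exists_mem_eq_sup _ hne (fun j => (h j).totalDegree)
  have hj0D : (h j0).totalDegree = D := by rw [← hj0, hD]
  have hj0ne : h j0 ≠ 0 := by
    intro hz
    rw [hz] at hj0D
    simp at hj0D
    omega
  have hsupne : (h j0).support.Nonempty := support_nonempty.mpr hj0ne
  obtain ⟨d, hd, hdsup⟩ := Finset.exists_mem_eq_sup _ hsupne (fun d => d.sum fun _ e => e)
  have hdd : (d.sum fun _ e => e) = D := by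
    have : (h j0).totalDegree = (h j0).support.sup fun d => d.sum fun _ e => e := rfl
    rw [← hj0D, this, hdsup]
  have hco : coeff d (homogeneousComponent D (h j0)) ≠ 0 := by
    rw [coeff_homogeneousComponent]
    rw [if_pos (by rw [show d.degree = d.sum fun _ e => e from rfl]; exact hdd)]
    exact mem_support_iff.mp hd
  rw [hq0 j0] at hco
  simp at hco


lemma exists_eOf_of_degree_le_one {d : Fin n →₀ ℕ} (hd : (d.sum fun _ e => e) ≤ 1) :
    ∃ i, d = eOf i := by
  have hcard : Multiset.card (Finsupp.toMultiset d) ≤ 1 := by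
    rw [Finsupp.card_toMultiset]
    exact hd
  interval_cases hM : Multiset.card (Finsupp.toMultiset d)
  · refine ⟨none, toMultiset_injective ?_⟩
    rw [toMultiset_eOf]
    simpa using Multiset.card_eq_zero.mp hM
  · obtain ⟨a, ha⟩ := Multiset.card_eq_one.mp hM
    refine ⟨some a, toMultiset_injective ?_⟩
    rw [toMultiset_eOf]
    simpa using ha

lemma affine_eq_sum {h : MvPolynomial (Fin n) ℝ} (hdeg : h.totalDegree ≤ 1) :
    h = ∑ i : Option (Fin n), monomial (eOf i) (coeff (eOf i) h) := by
  ext d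
  rw [coeff_sum]
  simp_rw [coeff_monomial]
  by_cases hdr : ∃ i, eOf i = d
  · obtain ⟨i0, hi0⟩ := hdr
    rw [Finset.sum_eq_single i0]
    · rw [if_pos hi0, hi0]
    · intro j _ hj
      rw [if_neg]
      intro hc
      exact hj (eOf_injective (hc.trans hi0.symm))
    · simp
  · push_neg at hdr
    rw [Finset.sum_eq_zero fun i _ => if_neg (hdr i)]
    symm
    by_contra hc
    have hds : d ∈ h.support := mem_support_iff.mpr fun hz => hc hz.symm
    have hd1 : (d.sum fun _ e => e) ≤ 1 := le_trans (le_totalDegree hds) hdeg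
    obtain ⟨i, hi⟩ := exists_eOf_of_degree_le_one hd1
    exact hdr i hi.symm

lemma exists_gpoly {σ : MvPolynomial (Fin n) ℝ} (hs : IsSOS σ) (hd : σ.totalDegree ≤ 2) :
    ∃ (N : ℕ) (r : Option (Fin n) → EuclideanSpace ℝ (Fin N)), σ = gpoly r := by
  obtain ⟨k, h, rfl⟩ := hs
  have hdeg1 := deg_le_one_of_sq_sum h hd
  refine ⟨k, fun i => WithLp.toLp 2 (fun j => coeff (eOf i) (h j)), ?_⟩
  rw [gpoly_eq_sum_sq]
  refine Finset.sum_congr rfl fun j _ => ?_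
  rw [← affine_eq_sum (hdeg1 j)]


/-- Chordal (running-intersection) splitting of a Gram family. -/
lemma clique_split {N : ℕ} : ∀ (p' : ℕ) (I : Fin (p' + 1) → Finset (Fin n))
    (_ : ∀ k : Fin (p' + 1), (k : ℕ) ≠ 0 → ∃ s : Fin (p' + 1), (s : ℕ) < (k : ℕ) ∧
      ∀ i ∈ I k, (∃ l : Fin (p' + 1), (l : ℕ) < (k : ℕ) ∧ i ∈ I l) → i ∈ I s)
    (r : Option (Fin n) → EuclideanSpace ℝ (Fin N))
    (_ : ∀ i i', (⟪r i, r i'⟫ : ℝ) ≠ 0 → ∃ k, SOf i ∪ SOf i' ⊆ I k),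
    ∃ q : Fin (p' + 1) → Option (Fin n) → EuclideanSpace ℝ (Fin N),
      (∀ k a, a ∉ I k → q k (some a) = 0) ∧
      (∀ i i', ∑ k, (⟪q k i, q k i'⟫ : ℝ) = ⟪r i, r i'⟫) := by
  intro p'
  induction p' with
  | zero =>
    intro I hrip r hpat
    refine ⟨fun _ i => match i with
      | none => r none
      | some a => if a ∈ I 0 then r (some a) else 0, ?_, ?_⟩
    · intro k a ha
      have hk : k = 0 := Fin.fin_one_eq_zero _
      subst hk
      simp [ha]
    · intro i i'
      rw [Fin.sum_univ_one]
      have hz : ∀ a, a ∉ I 0 → r (some a) = 0 := by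
        intro a ha
        by_contra hne
        have h0 : (⟪r (some a), r (some a)⟫ : ℝ) ≠ 0 := fun hz =>
          hne (inner_self_eq_zero.mp hz)
        obtain ⟨k, hk⟩ := hpat _ _ h0
        have hk0 : k = 0 := Fin.fin_one_eq_zero _
        subst hk0
        exact ha (hk (by simp [SOf]))
      cases i with
      | none => cases i' with
        | none => rfl
        | some a =>
          by_cases ha : a ∈ I 0
          · simp [ha]
          · simp [ha, hz a ha]
      | some a => cases i' with
        | none =>
          by_cases ha : a ∈ I 0
          · simp [ha]
          · simp [ha, hz a ha]
        | some b =>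
          by_cases ha : a ∈ I 0 <;> by_cases hb : b ∈ I 0 <;>
            simp [ha, hb, hz, hz a, hz b]
  | succ p' IH =>
    intro I hrip r hpat
    set last : Fin (p' + 1 + 1) := Fin.last (p' + 1) with hlast
    set W : Finset (Fin n) := Finset.univ.biUnion (fun k : Fin (p' + 1) => I k.castSucc)
      with hW
    set A : Finset (Fin n) := I last \ W with hA
    set T : Finset (Fin n) := I last ∩ W with hT
    -- the RIP separator for the last clique
    obtain ⟨s, hslt, hsprop⟩ := hrip last (by simp [hlast])
    have hsval : (s : ℕ) < p' + 1 := by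
      simpa [hlast] using hslt
    set s' : Fin (p' + 1) := ⟨(s : ℕ), hsval⟩ with hs'
    have hscast : s'.castSucc = s := by
      apply Fin.ext
      simp [hs']
    have hTsub : ∀ a ∈ T, a ∈ I s'.castSucc := by
      intro a ha
      rw [hscast]
      rw [hT, Finset.mem_inter] at ha
      obtain ⟨h1, h2⟩ := ha
      rw [hW, Finset.mem_biUnion] at h2
      obtain ⟨k', _, hk'⟩ := h2
      exact hsprop a h1 ⟨k'.castSucc, by simp [hlast, Fin.castSucc_lt_last k']; exact Nat.lt_succ_iff.mp k'.isLt, hk'⟩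
    -- the span of the private variables of the last clique
    set K : Submodule ℝ (EuclideanSpace ℝ (Fin N)) :=
      Submodule.span ℝ ((fun a => r (some a)) '' (A : Set (Fin n))) with hK
    have hmemK : ∀ a ∈ A, r (some a) ∈ K := fun a ha =>
      subset_span ⟨a, ha, rfl⟩
    -- variables outside the last clique are orthogonal to K
    have hAonly : ∀ a ∈ A, ∀ k : Fin (p' + 1 + 1), a ∈ I k → k = last := by
      intro a ha k hk
      rcases Fin.eq_castSucc_or_eq_last k with ⟨k', rfl⟩ | rfl
      · exfalso
        rw [hA, Finset.mem_sdiff] at ha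
        exact ha.2 (by rw [hW, Finset.mem_biUnion]; exact ⟨k', Finset.mem_univ _, hk⟩)
      · rfl
    have horthgen : ∀ b, b ∉ I last → ∀ a ∈ A, (⟪r (some a), r (some b)⟫ : ℝ) = 0 := by
      intro b hb a ha
      by_contra hne
      obtain ⟨k, hk⟩ := hpat _ _ hne
      have hbk : b ∈ I k := hk (by simp [SOf])
      have hak : a ∈ I k := hk (by simp [SOf])
      exact hb ((hAonly a ha k hak) ▸ hbk)
    have hbot : ∀ b, b ∉ I last → r (some b) ∈ Kᗮ := by
      intro b hb
      rw [Submodule.mem_orthogonal]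
      intro x hx
      induction hx using Submodule.span_induction with
      | mem x hxm =>
        obtain ⟨a, ha, rfl⟩ := hxm
        exact horthgen b hb a ha
      | zero => simp
      | add x y _ _ hx hy => rw [inner_add_left, hx, hy, add_zero]
      | smul c x _ hx => rw [inner_smul_left, hx, mul_zero]
    -- orthogonal projection onto K
    let π : EuclideanSpace ℝ (Fin N) → EuclideanSpace ℝ (Fin N) :=
      fun x => (orthogonalProjection K x : EuclideanSpace ℝ (Fin N))
    have hπmem : ∀ x, π x ∈ K := fun x => SetLike.coe_mem _
    have hπsub : ∀ x, x - π x ∈ Kᗮ := fun x => K.sub_starProjection_mem_orthogonal x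
    have hinner0 : ∀ x y : EuclideanSpace ℝ (Fin N), x ∈ K → y ∈ Kᗮ → (⟪x, y⟫ : ℝ) = 0 :=
      fun x y hx hy => Submodule.inner_right_of_mem_orthogonal hx hy
    have hinner0' : ∀ x y : EuclideanSpace ℝ (Fin N), x ∈ Kᗮ → y ∈ K → (⟪x, y⟫ : ℝ) = 0 :=
      fun x y hx hy => by rw [real_inner_comm]; exact hinner0 y x hy hx
    have hπadj : ∀ x y : EuclideanSpace ℝ (Fin N), (⟪π x, y⟫ : ℝ) = ⟪x, π y⟫ :=
      fun x y => K.inner_starProjection_left_eq_right x y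
    -- split r into the last-clique part and the rest
    classical
    let qlast : Option (Fin n) → EuclideanSpace ℝ (Fin N) := fun i =>
      match i with
      | none => π (r none)
      | some a => if a ∈ A then r (some a) else if a ∈ T then π (r (some a)) else 0
    let r' : Option (Fin n) → EuclideanSpace ℝ (Fin N) := fun i =>
      match i with
      | none => r none - π (r none)
      | some a => if a ∈ A then 0 else if a ∈ T then r (some a) - π (r (some a))
          else r (some a)
    have hATlast : ∀ a, a ∈ I last → a ∈ A ∨ a ∈ T := by
      intro a ha
      by_cases hW' : a ∈ W
      · exact Or.inr (by rw [hT]; exact Finset.mem_inter.mpr ⟨ha, hW'⟩)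
      · exact Or.inl (by rw [hA]; exact Finset.mem_sdiff.mpr ⟨ha, hW'⟩)
    have hnotlast : ∀ a, a ∉ A → a ∉ T → a ∉ I last := by
      intro a h1 h2 hc
      rcases hATlast a hc with h | h
      · exact h1 h
      · exact h2 h
    -- classification of indices
    have classify : ∀ i, (qlast i = r i ∧ r' i = 0 ∧ r i ∈ K) ∨
        ((SOf i : Set (Fin n)) ⊆ (T : Set (Fin n)) ∧ qlast i = π (r i) ∧ r' i = r i - π (r i)) ∨
        (∃ b, i = some b ∧ b ∉ I last ∧ qlast i = 0 ∧ r' i = r i ∧ r i ∈ Kᗮ) := by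
      intro i
      cases i with
      | none =>
        refine Or.inr (Or.inl ⟨by simp [SOf], rfl, rfl⟩)
      | some a =>
        by_cases hAa : a ∈ A
        · exact Or.inl ⟨by simp [qlast, hAa], by simp [r', hAa], hmemK a hAa⟩
        · by_cases hTa : a ∈ T
          · exact Or.inr (Or.inl ⟨by simp [SOf, hTa], by simp [qlast, hAa, hTa],
              by simp [r', hAa, hTa]⟩)
          · exact Or.inr (Or.inr ⟨a, rfl, hnotlast a hAa hTa,
              by simp [qlast, hAa, hTa], by simp [r', hAa, hTa],
              hbot a (hnotlast a hAa hTa)⟩)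
    -- the two pieces add up
    have claim1 : ∀ i i', (⟪qlast i, qlast i'⟫ : ℝ) + ⟪r' i, r' i'⟫ = ⟪r i, r i'⟫ := by
      intro i i'
      rcases classify i with ⟨hq, hr, hK1⟩ | ⟨_, hq, hr⟩ | ⟨b, _, _, hq, hr, hK1⟩ <;>
        rcases classify i' with ⟨hq', hr', hK2⟩ | ⟨_, hq', hr'⟩ | ⟨b', _, _, hq', hr', hK2⟩ <;>
          rw [hq, hr, hq', hr']
      · -- K K
        simp
      · -- K proj
        rw [inner_zero_left, add_zero]
        have h0 : (⟪r i, r i' - π (r i')⟫ : ℝ) = 0 := hinner0 _ _ hK1 (hπsub _)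
        have hexp := inner_sub_right (𝕜 := ℝ) (r i) (r i') (π (r i'))
        linarith
      · -- K orth
        rw [inner_zero_left, inner_zero_right, add_zero]
        exact (hinner0 _ _ hK1 hK2).symm
      · -- proj K
        rw [inner_zero_right, add_zero]
        have h0 : (⟪r i - π (r i), r i'⟫ : ℝ) = 0 := hinner0' _ _ (hπsub _) hK2
        have hexp := inner_sub_left (𝕜 := ℝ) (r i) (π (r i)) (r i')
        linarith
      · -- proj proj
        have h1 : (⟪r i - π (r i), π (r i')⟫ : ℝ) = 0 := hinner0' _ _ (hπsub _) (hπmem _)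
        have h2 : (⟪π (r i), r i' - π (r i')⟫ : ℝ) = 0 := hinner0 _ _ (hπmem _) (hπsub _)
        have e1 := inner_sub_left (𝕜 := ℝ) (r i) (π (r i)) (π (r i'))
        have e2 := inner_sub_left (𝕜 := ℝ) (r i) (π (r i)) (r i' - π (r i'))
        have e3 := inner_sub_right (𝕜 := ℝ) (r i) (r i') (π (r i'))
        linarith
      · -- proj orth
        rw [inner_zero_right]
        have h1 : (⟪π (r i), r i'⟫ : ℝ) = 0 := hinner0 _ _ (hπmem _) hK2
        have e1 := inner_sub_left (𝕜 := ℝ) (r i) (π (r i)) (r i')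
        linarith
      · -- orth K
        rw [inner_zero_left, inner_zero_right]
        have h1 : (⟪r i, r i'⟫ : ℝ) = 0 := hinner0' _ _ hK1 hK2
        linarith
      · -- orth proj
        rw [inner_zero_left]
        have h1 : (⟪r i, π (r i')⟫ : ℝ) = 0 := hinner0' _ _ hK1 (hπmem _)
        have e1 := inner_sub_right (𝕜 := ℝ) (r i) (r i') (π (r i'))
        linarith
      · -- orth orth
        simp
    -- pattern condition for the remainder family
    have claim2 : ∀ i i', (⟪r' i, r' i'⟫ : ℝ) ≠ 0 →
        ∃ k : Fin (p' + 1), SOf i ∪ SOf i' ⊆ I k.castSucc := by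
      intro i i' hne
      rcases classify i with ⟨hq, hr, hK1⟩ | ⟨hS, hq, hr⟩ | ⟨b, hb, hbl, hq, hr, hK1⟩
      · rw [hr, inner_zero_left] at hne
        exact absurd rfl hne
      · rcases classify i' with ⟨hq', hr', hK2⟩ | ⟨hS', hq', hr'⟩ | ⟨b', hb', hbl', hq', hr', hK2⟩
        · rw [hr', inner_zero_right] at hne
          exact absurd rfl hne
        · -- T/none vs T/none : inside the separator
          refine ⟨s', ?_⟩
          intro a ha
          rcases Finset.mem_union.mp ha with h | h
          · exact hTsub a (hS h)
          · exact hTsub a (hS' h)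
        · -- T/none vs outside-last
          have hinner : (⟪r' i, r' i'⟫ : ℝ) = ⟪r i, r i'⟫ := by
            rw [hr, hr']
            have h1 : (⟪π (r i), r i'⟫ : ℝ) = 0 := hinner0 _ _ (hπmem _) hK2
            have e1 := inner_sub_left (𝕜 := ℝ) (r i) (π (r i)) (r i')
            linarith
          rw [hinner] at hne
          obtain ⟨k, hk⟩ := hpat _ _ hne
          have hbk : b' ∈ I k := hk (Finset.mem_union_right _ (by rw [hb']; simp [SOf]))
          rcases Fin.eq_castSucc_or_eq_last k with ⟨k', rfl⟩ | rfl
          · exact ⟨k', hk⟩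
          · exact absurd hbk hbl'
      · rcases classify i' with ⟨hq', hr', hK2⟩ | ⟨hS', hq', hr'⟩ | ⟨b', hb', hbl', hq', hr', hK2⟩
        · rw [hr', inner_zero_right] at hne
          exact absurd rfl hne
        · -- outside-last vs T/none
          have hinner : (⟪r' i, r' i'⟫ : ℝ) = ⟪r i, r i'⟫ := by
            rw [hr, hr']
            have h1 : (⟪r i, π (r i')⟫ : ℝ) = 0 := hinner0' _ _ hK1 (hπmem _)
            have e1 := inner_sub_right (𝕜 := ℝ) (r i) (r i') (π (r i'))
            linarith
          rw [hinner] at hne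
          obtain ⟨k, hk⟩ := hpat _ _ hne
          have hbk : b ∈ I k := hk (Finset.mem_union_left _ (by rw [hb]; simp [SOf]))
          rcases Fin.eq_castSucc_or_eq_last k with ⟨k', rfl⟩ | rfl
          · exact ⟨k', hk⟩
          · exact absurd hbk hbl
        · -- outside vs outside
          rw [hr, hr'] at hne
          obtain ⟨k, hk⟩ := hpat _ _ hne
          have hbk : b ∈ I k := hk (Finset.mem_union_left _ (by rw [hb]; simp [SOf]))
          rcases Fin.eq_castSucc_or_eq_last k with ⟨k', rfl⟩ | rfl
          · exact ⟨k', hk⟩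
          · exact absurd hbk hbl
    -- the restricted cliques still satisfy RIP
    have hrip' : ∀ k : Fin (p' + 1), (k : ℕ) ≠ 0 → ∃ t : Fin (p' + 1), (t : ℕ) < (k : ℕ) ∧
        ∀ i ∈ I k.castSucc, (∃ l : Fin (p' + 1), (l : ℕ) < (k : ℕ) ∧ i ∈ I l.castSucc) →
          i ∈ I t.castSucc := by
      intro k hk
      obtain ⟨t, htlt, htprop⟩ := hrip k.castSucc (by simpa using hk)
      have htval : (t : ℕ) < p' + 1 := by
        have : (k : ℕ) < p' + 1 := k.isLt
        simp only [Fin.coe_castSucc] at htlt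
        omega
      refine ⟨⟨(t : ℕ), htval⟩, by simpa using htlt, ?_⟩
      intro i hi hex
      have hc : (⟨(t : ℕ), htval⟩ : Fin (p' + 1)).castSucc = t := Fin.ext (by simp)
      rw [hc]
      obtain ⟨l, hl1, hl2⟩ := hex
      exact htprop i hi ⟨l.castSucc, by simpa using hl1, hl2⟩
    obtain ⟨qq, hqq1, hqq2⟩ := IH (fun k => I k.castSucc) hrip' r' claim2
    refine ⟨Fin.lastCases qlast qq, ?_, ?_⟩
    · intro k a ha
      rcases Fin.eq_castSucc_or_eq_last k with ⟨k', rfl⟩ | rfl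
      · have : (Fin.lastCases qlast qq : ∀ _ : Fin (p' + 1 + 1), Option (Fin n) → EuclideanSpace ℝ (Fin N)) k'.castSucc = qq k' := Fin.lastCases_castSucc k'
        rw [this]
        exact hqq1 k' a ha
      · have : (Fin.lastCases qlast qq : ∀ _ : Fin (p' + 1 + 1), Option (Fin n) → EuclideanSpace ℝ (Fin N)) (Fin.last (p' + 1)) = qlast := Fin.lastCases_last
        rw [this]
        have h1 : a ∉ A := fun h => ha (by rw [hA] at h; exact (Finset.mem_sdiff.mp h).1)
        have h2 : a ∉ T := fun h => ha (by rw [hT] at h; exact (Finset.mem_inter.mp h).1)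
        simp [qlast, h1, h2]
    · intro i i'
      rw [Fin.sum_univ_castSucc]
      have e1 : ∀ k' : Fin (p' + 1), (Fin.lastCases qlast qq : ∀ _ : Fin (p' + 1 + 1), Option (Fin n) → EuclideanSpace ℝ (Fin N)) k'.castSucc = qq k' := fun k' => Fin.lastCases_castSucc k'
      have e2 : (Fin.lastCases qlast qq : ∀ _ : Fin (p' + 1 + 1), Option (Fin n) → EuclideanSpace ℝ (Fin N)) (Fin.last (p' + 1)) = qlast := Fin.lastCases_last
      simp only [e1, e2]
      rw [hqq2 i i']
      rw [← claim1 i i']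
      ring


lemma isSOS_zero : IsSOS (0 : MvPolynomial (Fin n) ℝ) := ⟨0, fun j => 0, by simp⟩

lemma isSOS_add {a b : MvPolynomial (Fin n) ℝ} (ha : IsSOS a) (hb : IsSOS b) :
    IsSOS (a + b) := by
  obtain ⟨k1, h1, rfl⟩ := ha
  obtain ⟨k2, h2, rfl⟩ := hb
  refine ⟨k1 + k2, Fin.addCases h1 h2, ?_⟩
  rw [Fin.sum_univ_add]
  congr 1
  · exact Finset.sum_congr rfl fun j _ => by simp
  · exact Finset.sum_congr rfl fun j _ => by simp

lemma isSOS_sum {k : ℕ} (σ : Fin k → MvPolynomial (Fin n) ℝ) (h : ∀ j, IsSOS (σ j)) :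
    IsSOS (∑ j, σ j) := by
  classical
  induction k with
  | zero => simpa using isSOS_zero
  | succ k IH =>
    rw [Fin.sum_univ_castSucc]
    exact isSOS_add (IH _ fun j => h j.castSucc) (h (Fin.last k))

lemma isSOS_C {c : ℝ} (hc : 0 ≤ c) : IsSOS (C c : MvPolynomial (Fin n) ℝ) := by
  refine ⟨1, fun _ => C (Real.sqrt c), ?_⟩
  rw [Fin.sum_univ_one, ← map_pow, sq, Real.mul_self_sqrt hc]

lemma nonneg_of_isSOS_C {c : ℝ} (hc : IsSOS (C c : MvPolynomial (Fin n) ℝ)) : 0 ≤ c := by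
  obtain ⟨k, h, hh⟩ := hc
  have := congrArg (eval (fun _ => (0 : ℝ))) hh
  rw [eval_C, map_sum] at this
  rw [this]
  exact Finset.sum_nonneg fun j _ => by rw [map_pow]; positivity

end SparseSOSAux

open SparseSOSAux

/-- Proposition 2: for degree-2 data whose monomials and constraints are supported on
cliques `I₁,…,I_p` covering the variables and satisfying the running intersection
property, the supremum of `φ` admitting a dense order-1 certificate
`f − φ = σ₀ + Σ λᵢ·gᵢ` equals the supremum of `φ` admitting a sparse order-1
certificate `f − φ = Σ_k σ_k + Σ λᵢ·gᵢ` with each `σ_k` SOS of degree ≤ 2 supported on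
`I_k`: [OP₂-SH₁]* is equivalent to [OP₂-H₁]* and hence to the Lavaei–Low dual SDP. -/
theorem sparse_order_one_eq_dense_order_one {n m p : ℕ}
    (f : MvPolynomial (Fin n) ℝ) (g : Fin m → MvPolynomial (Fin n) ℝ)
    (hfdeg : f.totalDegree ≤ 2) (hgdeg : ∀ i, (g i).totalDegree ≤ 2)
    (I : Fin p → Finset (Fin n))
    (hcover : ∀ i : Fin n, ∃ k, i ∈ I k)
    (hrip : ∀ k : Fin p, (k : ℕ) ≠ 0 → ∃ s : Fin p, (s : ℕ) < (k : ℕ) ∧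
      ∀ i ∈ I k, (∃ l : Fin p, (l : ℕ) < (k : ℕ) ∧ i ∈ I l) → i ∈ I s)
    (hfsupp : ∀ d ∈ f.support, ∃ k, ∀ i ∈ d.support, i ∈ I k)
    (hgsupp : ∀ j, ∃ k, (g j).vars ⊆ I k) :
    sSup {φ : ℝ | ∃ (σ₀ : MvPolynomial (Fin n) ℝ) (lam : Fin m → ℝ),
        IsSOS σ₀ ∧ σ₀.totalDegree ≤ 2 ∧ (∀ i, 0 ≤ lam i) ∧
        f - C φ = σ₀ + ∑ i, C (lam i) * g i}
      = sSup {φ : ℝ | ∃ (σ : Fin p → MvPolynomial (Fin n) ℝ) (lam : Fin m → ℝ),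
        (∀ k, IsSOS (σ k) ∧ (σ k).totalDegree ≤ 2 ∧ (σ k).vars ⊆ I k) ∧
        (∀ i, 0 ≤ lam i) ∧
        f - C φ = ∑ k, σ k + ∑ i, C (lam i) * g i} := by
  classical
  rcases Nat.eq_zero_or_pos p with hp0 | hppos
  · -- degenerate case : no cliques, so no variables, no constraints, and `f = 0`
    subst hp0
    have hf : f = 0 := by
      rw [← support_eq_empty, Finset.eq_empty_iff_forall_notMem]
      intro d hd
      obtain ⟨k, -⟩ := hfsupp d hd
      exact k.elim0
    have hm : (Finset.univ : Finset (Fin m)) = ∅ := by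
      rw [Finset.eq_empty_iff_forall_notMem]
      intro j _
      obtain ⟨k, -⟩ := hgsupp j
      exact k.elim0
    have hsum0 : ∀ lam : Fin m → ℝ, ∑ i, C (lam i) * g i = (0 : MvPolynomial (Fin n) ℝ) := by
      intro lam
      rw [hm, Finset.sum_empty]
    have hset1 : {φ : ℝ | ∃ (σ₀ : MvPolynomial (Fin n) ℝ) (lam : Fin m → ℝ),
        IsSOS σ₀ ∧ σ₀.totalDegree ≤ 2 ∧ (∀ i, 0 ≤ lam i) ∧
        f - C φ = σ₀ + ∑ i, C (lam i) * g i} = Set.Iic 0 := by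
      ext φ
      simp only [Set.mem_setOf_eq, Set.mem_Iic]
      constructor
      · rintro ⟨σ₀, lam, hsos, hdeg, hlam, heq⟩
        rw [hf, hsum0] at heq
        have hC : (C (-φ) : MvPolynomial (Fin n) ℝ) = σ₀ := by
          rw [map_neg]
          linear_combination heq
        have := nonneg_of_isSOS_C (hC ▸ hsos)
        linarith
      · intro hφ
        refine ⟨C (-φ), fun _ => 0, isSOS_C (by linarith), by simp, fun i => le_refl 0, ?_⟩
        rw [hf, hsum0, map_neg]
        ring
    have hset2 : {φ : ℝ | ∃ (σ : Fin 0 → MvPolynomial (Fin n) ℝ) (lam : Fin m → ℝ),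
        (∀ k, IsSOS (σ k) ∧ (σ k).totalDegree ≤ 2 ∧ (σ k).vars ⊆ I k) ∧
        (∀ i, 0 ≤ lam i) ∧
        f - C φ = ∑ k, σ k + ∑ i, C (lam i) * g i} = {0} := by
      ext φ
      simp only [Set.mem_setOf_eq, Set.mem_singleton_iff]
      constructor
      · rintro ⟨σ, lam, hσ, hlam, heq⟩
        rw [hf, hsum0, Finset.univ_eq_empty, Finset.sum_empty, add_zero, zero_sub,
          neg_eq_zero] at heq
        have : φ = 0 := by
          have h2 := congrArg (eval (fun _ => (0 : ℝ))) heq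
          simpa using h2
        exact this
      · rintro rfl
        refine ⟨fun k => k.elim0, fun _ => 0, fun k => k.elim0, fun i => le_refl 0, ?_⟩
        rw [hf, hsum0, Finset.univ_eq_empty, Finset.sum_empty]
        simp
    rw [hset1, hset2, csSup_Iic, csSup_singleton]
  · -- main case
    obtain ⟨p', rfl⟩ : ∃ p', p = p' + 1 := ⟨p - 1, by omega⟩
    congr 1
    ext φ
    simp only [Set.mem_setOf_eq]
    constructor
    · rintro ⟨σ₀, lam, hsos, hdeg, hlam, heq⟩
      -- every monomial of σ₀ lives in some clique
      have hσeq : σ₀ = f - C φ - ∑ i, C (lam i) * g i := by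
        rw [heq]
        ring
      have hσsupp : ∀ d ∈ σ₀.support, ∃ k, d.support ⊆ I k := by
        intro d hd
        have hcoeff : coeff d σ₀ ≠ 0 := mem_support_iff.mp hd
        by_cases h1 : d ∈ f.support
        · obtain ⟨k, hk⟩ := hfsupp d h1
          exact ⟨k, fun a ha => hk a ha⟩
        by_cases h2 : ∃ j, d ∈ (g j).support
        · obtain ⟨j, hj⟩ := h2
          obtain ⟨k, hk⟩ := hgsupp j
          exact ⟨k, fun a ha => hk ((mem_vars a).mpr ⟨d, hj, ha⟩)⟩
        push_neg at h2
        have hd0 : d = 0 := by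
          by_contra hdne
          apply hcoeff
          rw [hσeq, coeff_sub, coeff_sub, coeff_C, if_neg (fun hh => hdne hh.symm),
            notMem_support_iff.mp h1, coeff_sum]
          simp only [coeff_C_mul]
          rw [Finset.sum_eq_zero fun j _ => by
            rw [notMem_support_iff.mp (h2 j), mul_zero]]
          ring
        refine ⟨0, ?_⟩
        rw [hd0]
        simp
      obtain ⟨N, r, hr⟩ := exists_gpoly hsos hdeg
      have hpat := pattern_of_support (I := I) (r := r) (by rw [← hr]; exact hσsupp)
      obtain ⟨q, hq1, hq2⟩ := clique_split p' I hrip r hpat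
      refine ⟨fun k => gpoly (q k), lam, ?_, hlam, ?_⟩
      · intro k
        exact ⟨isSOS_gpoly _, totalDegree_gpoly _,
          vars_gpoly _ _ (fun a ha => hq1 k a ha)⟩
      · rw [heq, sum_gpoly q r hq2, ← hr]
    · rintro ⟨σ, lam, hσ, hlam, heq⟩
      exact ⟨∑ k, σ k, lam, isSOS_sum _ (fun k => (hσ k).1),
        (totalDegree_finset_sum _ _).trans (Finset.sup_le fun k _ => (hσ k).2.1),
        hlam, heq⟩
end
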